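/- arXiv:1202.1237 — 4 statements merged into one kernel-verified Lean document; each statement's English description precedes it below -/
import Mathlib

section
/- For every nonnegative integer n and real (or polynomial variable) x, the Legendre polynomial satisfies P_{2n}(x) = \sum_{k=0}^{n} \binom{n}{k} \binom{-1/2 - n}{k} (1 - x^2)^k. -/
open Polynomial Finset

/-- The Legendre polynomials over `ℚ`, defined by the three-term recurrence
`P₀ = 1`, `P₁ = X`, `(n+2)·P_{n+2} = (2n+3)·X·P_{n+1} - (n+1)·P_n`. -/
noncomputable def legendreP : ℕ → Polynomial ℚ
  | 0 => 1
  | 1 => X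
  | n + 2 => C ((n + 2 : ℚ))⁻¹ *
      (C (2 * (n : ℚ) + 3) * X * legendreP (n + 1) - C ((n : ℚ) + 1) * legendreP n)

/-- The generalized binomial coefficient `a(a-1)⋯(a-k+1)/k!`. -/
def gchoose (a : ℚ) (k : ℕ) : ℚ :=
  (∏ i ∈ Finset.range k, (a - i)) / (Nat.factorial k)

lemma gchoose_zero (a : ℚ) : gchoose a 0 = 1 := by simp [gchoose]

lemma gchoose_succ (a : ℚ) (k : ℕ) :
    gchoose a (k+1) * (k+1) = gchoose a k * (a - k) := by
  have hf : ((k+1).factorial : ℚ) ≠ 0 := by exact_mod_cast (k+1).factorial_ne_zero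
  have hf' : (k.factorial : ℚ) ≠ 0 := by exact_mod_cast k.factorial_ne_zero
  simp only [gchoose, Finset.prod_range_succ, Nat.factorial_succ]
  field_simp
  push_cast
  ring

lemma gchoose_shift (a : ℚ) (k : ℕ) :
    gchoose (a-1) k * a = gchoose a k * (a - k) := by
  have hf' : (k.factorial : ℚ) ≠ 0 := by exact_mod_cast k.factorial_ne_zero
  have key : (∏ i ∈ Finset.range k, (a - 1 - i)) * a
      = (∏ i ∈ Finset.range k, (a - i)) * (a - k) := by
    have h1 := Finset.prod_range_succ' (fun i => a - i) k
    have h2 := Finset.prod_range_succ (fun i => a - i) k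
    have h3 : (∏ i ∈ Finset.range k, (a - 1 - i))
        = ∏ i ∈ Finset.range k, (a - ((i:ℕ)+1 : ℕ)) := by
      apply Finset.prod_congr rfl
      intro i _
      push_cast
      ring
    rw [h3]
    calc (∏ i ∈ Finset.range k, (a - ((i:ℕ)+1 : ℕ))) * a
        = (∏ i ∈ Finset.range k, (a - ((i:ℕ)+1 : ℕ))) * (a - (0:ℕ)) := by norm_num
      _ = ∏ i ∈ Finset.range (k+1), (a - i) := h1.symm
      _ = (∏ i ∈ Finset.range k, (a - i)) * (a - k) := h2
  simp only [gchoose]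
  field_simp
  linear_combination key

lemma choose_cast1 (n k : ℕ) :
    ((n:ℚ) + 1 - k) * ((n+1).choose k) = ((n:ℚ) + 1) * (n.choose k) := by
  rcases le_or_gt k (n+1) with h | h
  · have hn := Nat.choose_mul_succ_eq n k
    have hc : ((n + 1 - k : ℕ) : ℚ) = (n:ℚ) + 1 - k := by
      push_cast [Nat.cast_sub h]; ring
    have := congrArg (fun m : ℕ => (m : ℚ)) hn
    push_cast at this
    rw [← hc]
    linarith [this]
  · rw [Nat.choose_eq_zero_of_lt h, Nat.choose_eq_zero_of_lt (by omega)]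
    simp

lemma choose_cast2 (n k : ℕ) :
    ((k:ℚ) + 1) * (n.choose (k+1)) = ((n:ℚ) - k) * (n.choose k) := by
  rcases le_or_gt k n with h | h
  · have hn := Nat.choose_succ_right_eq n k
    have hc : ((n - k : ℕ) : ℚ) = (n:ℚ) - k := by push_cast [Nat.cast_sub h]; ring
    have := congrArg (fun m : ℕ => (m : ℚ)) hn
    push_cast at this
    rw [← hc]
    linarith [this]
  · rw [Nat.choose_eq_zero_of_lt h, Nat.choose_eq_zero_of_lt (by omega)]
    simp

lemma L1term (n k : ℕ) :
    (4*(n:ℚ)+5) * ((n+1).choose k) * gchoose (-3/2 - n) k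
      - (2*(n:ℚ)+2) * (n.choose k) * gchoose (-3/2 - n) k
    = (2*(n:ℚ)+3) * ((n+1).choose k) * gchoose (-5/2 - n) k := by
  have hb : (-3/2 - (n:ℚ)) ≠ 0 := by
    have : (0:ℚ) ≤ (n:ℚ) := n.cast_nonneg
    intro h; linarith [h]
  have hg := gchoose_shift (-3/2 - (n:ℚ)) k
  rw [show (-3/2 - (n:ℚ)) - 1 = -5/2 - n by ring] at hg
  have h1 := choose_cast1 n k
  refine mul_left_cancel₀ hb ?_
  linear_combination (-(2*(n:ℚ)+3) * ((n+1).choose k)) * hg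
    + (-(2*(n:ℚ)+3) * gchoose (-3/2 - (n:ℚ)) k) * h1

lemma L2term (n k : ℕ) :
    (4*(n:ℚ)+3) * ((n.choose (k+1) : ℚ) * gchoose (-3/2 - n) (k+1)
        - (n.choose k : ℚ) * gchoose (-3/2 - n) k)
      - (2*(n:ℚ)+1) * (n.choose (k+1)) * gchoose (-1/2 - n) (k+1)
    = (2*(n:ℚ)+2) * ((n+1).choose (k+1)) * gchoose (-3/2 - n) (k+1) := by
  have hD : (-3/2 - (n:ℚ) - k) ≠ 0 := by
    have h1 : (0:ℚ) ≤ (n:ℚ) := n.cast_nonneg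
    have h2 : (0:ℚ) ≤ (k:ℚ) := k.cast_nonneg
    intro h; linarith [h]
  have hg1 := gchoose_succ (-3/2 - (n:ℚ)) k
  have hg2 := gchoose_shift (-1/2 - (n:ℚ)) (k+1)
  rw [show (-1/2 - (n:ℚ)) - 1 = -3/2 - n by ring] at hg2
  push_cast at hg2
  have h1 := choose_cast2 n k
  have h2 : (((n+1).choose (k+1) : ℕ) : ℚ) = (n.choose k : ℚ) + (n.choose (k+1) : ℚ) := by
    rw [Nat.choose_succ_succ]; push_cast; ring
  refine mul_left_cancel₀ hD ?_
  linear_combination ((4*(n:ℚ)+3) * (n.choose k)) * hg1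
    + ((2*(n:ℚ)+1) * (n.choose (k+1))) * hg2
    + (-(2*(n:ℚ)+1) * gchoose (-3/2 - (n:ℚ)) (k+1)) * h1
    + (-(2*(n:ℚ)+2) * gchoose (-3/2 - (n:ℚ)) (k+1) * (-3/2 - (n:ℚ) - k)) * h2

noncomputable def Ssum (n : ℕ) (x : ℚ) : ℚ :=
  ∑ k ∈ Finset.range (n+1), (n.choose k : ℚ) * gchoose (-1/2 - n) k * (1 - x^2)^k

noncomputable def Tsum (n : ℕ) (x : ℚ) : ℚ :=
  ∑ k ∈ Finset.range (n+1), (n.choose k : ℚ) * gchoose (-3/2 - n) k * (1 - x^2)^k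

lemma Ssum_ext (n : ℕ) (x : ℚ) : Ssum n x
    = ∑ k ∈ Finset.range (n+2), (n.choose k : ℚ) * gchoose (-1/2 - n) k * (1 - x^2)^k := by
  unfold Ssum
  rw [Finset.sum_range_succ (n := n+1), Nat.choose_succ_self]
  simp

lemma Tsum_ext (n : ℕ) (x : ℚ) : Tsum n x
    = ∑ k ∈ Finset.range (n+2), (n.choose k : ℚ) * gchoose (-3/2 - n) k * (1 - x^2)^k := by
  unfold Tsum
  rw [Finset.sum_range_succ (n := n+1), Nat.choose_succ_self]
  simp

lemma Ssum_succ (n : ℕ) (x : ℚ) : Ssum (n+1) x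
    = ∑ k ∈ Finset.range (n+2), ((n+1).choose k : ℚ) * gchoose (-3/2 - n) k * (1 - x^2)^k := by
  unfold Ssum
  rw [show (-1/2 - (((n+1) : ℕ) : ℚ)) = -3/2 - n by push_cast; ring]

lemma Tsum_succ (n : ℕ) (x : ℚ) : Tsum (n+1) x
    = ∑ k ∈ Finset.range (n+2), ((n+1).choose k : ℚ) * gchoose (-5/2 - n) k * (1 - x^2)^k := by
  unfold Tsum
  rw [show (-3/2 - (((n+1) : ℕ) : ℚ)) = -5/2 - n by push_cast; ring]

lemma L1sum (n : ℕ) (x : ℚ) :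
    (4*(n:ℚ)+5) * Ssum (n+1) x - (2*(n:ℚ)+2) * Tsum n x = (2*(n:ℚ)+3) * Tsum (n+1) x := by
  rw [Ssum_succ, Tsum_succ, Tsum_ext]
  rw [Finset.mul_sum, Finset.mul_sum, Finset.mul_sum, ← Finset.sum_sub_distrib]
  refine Finset.sum_congr rfl fun k _ => ?_
  linear_combination ((1 - x^2)^k) * L1term n k

lemma L2sum (n : ℕ) (x : ℚ) :
    (4*(n:ℚ)+3) * (x^2 * Tsum n x) - (2*(n:ℚ)+1) * Ssum n x = (2*(n:ℚ)+2) * Ssum (n+1) x := by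
  have hx : x^2 * Tsum n x
      = (∑ k ∈ Finset.range (n+2), (n.choose k : ℚ) * gchoose (-3/2 - n) k * (1 - x^2)^k)
        - ∑ k ∈ Finset.range (n+1), (n.choose k : ℚ) * gchoose (-3/2 - n) k * (1 - x^2)^(k+1) := by
    rw [show (∑ k ∈ Finset.range (n+2), (n.choose k : ℚ) * gchoose (-3/2 - n) k * (1 - x^2)^k)
        = Tsum n x from (Tsum_ext n x).symm]
    unfold Tsum
    rw [Finset.mul_sum, ← Finset.sum_sub_distrib]
    refine Finset.sum_congr rfl fun k _ => ?_
    ring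
  rw [hx, Ssum_ext, Ssum_succ]
  rw [Finset.sum_range_succ' (fun k => (n.choose k : ℚ) * gchoose (-3/2 - n) k * (1 - x^2)^k) (n+1),
      Finset.sum_range_succ' (fun k => (n.choose k : ℚ) * gchoose (-1/2 - n) k * (1 - x^2)^k) (n+1),
      Finset.sum_range_succ' (fun k => ((n+1).choose k : ℚ) * gchoose (-3/2 - n) k * (1 - x^2)^k) (n+1)]
  simp only [gchoose_zero, Nat.choose_zero_right, pow_zero, Nat.cast_one, mul_one, one_mul]
  have main : ∑ k ∈ Finset.range (n+1),
        ((4*(n:ℚ)+3) * ((n.choose (k+1) : ℚ) * gchoose (-3/2 - n) (k+1) * (1 - x^2)^(k+1))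
          - (4*(n:ℚ)+3) * ((n.choose k : ℚ) * gchoose (-3/2 - n) k * (1 - x^2)^(k+1))
          - (2*(n:ℚ)+1) * ((n.choose (k+1) : ℚ) * gchoose (-1/2 - n) (k+1) * (1 - x^2)^(k+1)))
      = ∑ k ∈ Finset.range (n+1),
        ((2*(n:ℚ)+2) * (((n+1).choose (k+1) : ℚ) * gchoose (-3/2 - n) (k+1) * (1 - x^2)^(k+1))) := by
    refine Finset.sum_congr rfl fun k _ => ?_
    linear_combination ((1 - x^2)^(k+1)) * L2term n k
  rw [Finset.sum_sub_distrib, Finset.sum_sub_distrib, ← Finset.mul_sum, ← Finset.mul_sum,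
      ← Finset.mul_sum, ← Finset.mul_sum] at main
  linear_combination main

lemma legendreP_add_two (n : ℕ) : legendreP (n+2) = C ((n + 2 : ℚ))⁻¹ *
      (C (2 * (n : ℚ) + 3) * X * legendreP (n + 1) - C ((n : ℚ) + 1) * legendreP n) := by
  rw [legendreP]

lemma legendre_both (n : ℕ) (x : ℚ) :
    (legendreP (2*n)).eval x = Ssum n x ∧ (legendreP (2*n+1)).eval x = x * Tsum n x := by
  induction n with
  | zero =>
    constructor
    · simp [legendreP, Ssum, gchoose_zero]
    · simp [legendreP, Tsum, gchoose_zero]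
  | succ n ih =>
    obtain ⟨ihE, ihO⟩ := ih
    have h2n2 : ((2*n : ℕ) : ℚ) + 2 ≠ 0 := by positivity
    have hE : (legendreP (2*(n+1))).eval x = Ssum (n+1) x := by
      rw [show 2*(n+1) = (2*n)+2 by ring, legendreP_add_two]
      simp only [eval_mul, eval_sub, eval_C, eval_X, ihE]
      rw [show (2*n)+1 = 2*n+1 from rfl] at ihO
      rw [ihO]
      have key := L2sum n x
      push_cast
      push_cast at key h2n2
      field_simp
      linear_combination key
    refine ⟨hE, ?_⟩
    have h2n3 : ((2*n+1 : ℕ) : ℚ) + 2 ≠ 0 := by positivity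
    rw [show 2*(n+1)+1 = (2*n+1)+2 by ring, legendreP_add_two]
    simp only [eval_mul, eval_sub, eval_C, eval_X, ihO]
    rw [show (2*n+1)+1 = 2*(n+1) by ring, hE]
    have key := L1sum n x
    push_cast
    push_cast at key h2n3
    field_simp
    linear_combination x * key

theorem legendre_even_sum (n : ℕ) (x : ℚ) :
    (legendreP (2 * n)).eval x =
      ∑ k ∈ Finset.range (n + 1),
        (n.choose k : ℚ) * gchoose (-1/2 - (n : ℚ)) k * (1 - x ^ 2) ^ k := by
  exact (legendre_both n x).1
end

section
/- Let p be an odd prime and let m be an integer with 1 \le m \le (p-1)/2. Then the Legendre polynomials satisfy the congruence P_{p-1-m}(x) \equiv P_m(x) (mod p), i.e., all coefficients of P_{p-1-m}(x) - P_m(x), viewed as polynomials with coefficients in Z localized at p (or after clearing denominators coprime to p), are divisible by p. -/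
open Polynomial Finset

/-- A rational number is `p`-integral if `p` does not divide its denominator. -/
def pInt (p : ℕ) (r : ℚ) : Prop := ¬ (p ∣ r.den)

/-- Congruence modulo `p` in the ring of `p`-integral rationals:
`r ≡ s (mod p)` iff `r - s = p·c` for some `p`-integral rational `c`. -/
def pCong (p : ℕ) (r s : ℚ) : Prop := ∃ c : ℚ, pInt p c ∧ r - s = p * c

section Aux

variable (p : ℕ) [hpf : Fact p.Prime]

lemma my_pInt_iff {r : ℚ} : pInt p r ↔ ((r.den : ZMod p)) ≠ 0 := by
  rw [Ne, ZMod.natCast_eq_zero_iff]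
  rfl

lemma my_pInt_natCast (n : ℕ) : pInt p ((n : ℚ)) := by
  intro h
  rw [Rat.den_natCast] at h
  exact hpf.out.one_lt.ne' (Nat.dvd_one.mp h)

lemma my_pInt_add {r s : ℚ} (hr : pInt p r) (hs : pInt p s) : pInt p (r + s) := by
  intro h
  rcases (hpf.out.dvd_mul.mp (h.trans (Rat.add_den_dvd r s))) with h' | h'
  exacts [hr h', hs h']

lemma my_pInt_mul {r s : ℚ} (hr : pInt p r) (hs : pInt p s) : pInt p (r * s) := by
  intro h
  rcases (hpf.out.dvd_mul.mp (h.trans (Rat.mul_den_dvd r s))) with h' | h'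
  exacts [hr h', hs h']

lemma my_pInt_neg {r : ℚ} (hr : pInt p r) : pInt p (-r) := by
  intro h; rw [Rat.den_neg_eq_den] at h; exact hr h

lemma my_pInt_sub {r s : ℚ} (hr : pInt p r) (hs : pInt p s) : pInt p (r - s) := by
  rw [sub_eq_add_neg]; exact my_pInt_add p hr (my_pInt_neg p hs)

lemma my_pInt_zero : pInt p 0 := by
  simpa using my_pInt_natCast p 0

lemma my_pInt_one : pInt p 1 := by
  simpa using my_pInt_natCast p 1

lemma my_pInt_inv_natCast {n : ℕ} (h : ¬ p ∣ n) : pInt p ((n : ℚ))⁻¹ := by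
  intro hd
  apply h
  have h2 := Rat.den_dvd 1 (n : ℤ)
  rw [Rat.divInt_eq_div] at h2
  rw [show ((1 : ℤ) : ℚ) / ((n : ℤ) : ℚ) = ((n : ℚ))⁻¹ by push_cast; rw [one_div]] at h2
  have : ((n : ℚ))⁻¹.den ∣ n := by exact_mod_cast h2
  exact hd.trans this

lemma my_cast_add {r s : ℚ} (hr : pInt p r) (hs : pInt p s) :
    ((r + s : ℚ) : ZMod p) = (r : ZMod p) + (s : ZMod p) :=
  Rat.cast_add_of_ne_zero ((my_pInt_iff p).mp hr) ((my_pInt_iff p).mp hs)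

lemma my_cast_mul {r s : ℚ} (hr : pInt p r) (hs : pInt p s) :
    ((r * s : ℚ) : ZMod p) = (r : ZMod p) * (s : ZMod p) :=
  Rat.cast_mul_of_ne_zero ((my_pInt_iff p).mp hr) ((my_pInt_iff p).mp hs)

lemma my_cast_sub {r s : ℚ} (hr : pInt p r) (hs : pInt p s) :
    ((r - s : ℚ) : ZMod p) = (r : ZMod p) - (s : ZMod p) :=
  Rat.cast_sub_of_ne_zero ((my_pInt_iff p).mp hr) ((my_pInt_iff p).mp hs)

lemma my_natCast_ne_zero {n : ℕ} (h0 : 0 < n) (h1 : n < p) : ((n : ZMod p)) ≠ 0 := by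
  rw [Ne, ZMod.natCast_eq_zero_iff]
  intro hd
  exact absurd (Nat.le_of_dvd h0 hd) (by omega)

lemma my_cast_inv_natCast {n : ℕ} (h0 : 0 < n) (h1 : n < p) :
    ((((n : ℚ))⁻¹ : ℚ) : ZMod p) = ((n : ZMod p))⁻¹ := by
  have hnum : (((n : ℚ).num : ZMod p)) ≠ 0 := by
    rw [Rat.num_natCast]
    push_cast
    exact my_natCast_ne_zero p h0 h1
  rw [Rat.cast_inv_of_ne_zero hnum, Rat.cast_natCast]

/-- If `r` and `s` are `p`-integral and have equal images in `ZMod p`, they are congruent. -/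
lemma my_pCong_of_cast_eq {r s : ℚ} (hr : pInt p r) (hs : pInt p s)
    (h : (r : ZMod p) = (s : ZMod p)) : pCong p r s := by
  have hp0 : (p : ℚ) ≠ 0 := by exact_mod_cast hpf.out.pos.ne'
  set t := r - s with ht
  have hti : pInt p t := my_pInt_sub p hr hs
  have htc : (t : ZMod p) = 0 := by rw [ht, my_cast_sub p hr hs, h, sub_self]
  have hden : ((t.den : ZMod p)) ≠ 0 := (my_pInt_iff p).mp hti
  have hnum : ((t.num : ZMod p)) = 0 := by
    rw [Rat.cast_def] at htc
    field_simp at htc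
    rwa [mul_zero] at htc
  have hdvd : (p : ℤ) ∣ t.num := by
    rwa [ZMod.intCast_zmod_eq_zero_iff_dvd] at hnum
  obtain ⟨a, ha⟩ := hdvd
  refine ⟨t / p, ?_, by field_simp; exact ht.symm⟩
  have hden0 : ((t.den : ℚ)) ≠ 0 := by exact_mod_cast t.den_ne_zero
  have h4 : t * (t.den : ℚ) = (t.num : ℚ) :=
    (((div_eq_iff hden0).mp (Rat.num_div_den t)).symm).symm ▸
      ((div_eq_iff hden0).mp (Rat.num_div_den t)).symm
  have htv : t / p = (a : ℚ) / (t.den : ℚ) := by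
    rw [div_eq_div_iff hp0 hden0, h4, ha]
    push_cast
    ring
  rw [htv]
  intro hd
  apply hti
  have h2 := Rat.den_dvd a (t.den : ℤ)
  rw [Rat.divInt_eq_div] at h2
  have h3 : ((a : ℚ) / (t.den : ℚ)).den ∣ t.den := by
    rw [show ((t.den : ℤ) : ℚ) = (t.den : ℚ) by push_cast; rfl] at h2
    exact_mod_cast h2
  exact hd.trans h3

/-- Reduction of a rational polynomial (with `p`-integral coefficients) mod `p`. -/
noncomputable def redQ (f : Polynomial ℚ) : Polynomial (ZMod p) :=
  ∑ k ∈ f.support, C ((f.coeff k : ℚ) : ZMod p) * X ^ k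

lemma redQ_coeff (f : Polynomial ℚ) (k : ℕ) :
    (redQ p f).coeff k = ((f.coeff k : ℚ) : ZMod p) := by
  classical
  rw [redQ, finset_sum_coeff]
  simp only [coeff_C_mul, coeff_X_pow, mul_ite, mul_one, mul_zero]
  rw [Finset.sum_ite_eq f.support k fun n => ((f.coeff n : ℚ) : ZMod p)]
  by_cases h : k ∈ f.support
  · simp [h]
  · simp only [h, if_false]
    rw [Polynomial.notMem_support_iff.mp h]
    simp

lemma my_cast_coeff_X_mul (f : Polynomial ℚ) (k : ℕ) :
    (((X * f : Polynomial ℚ).coeff k : ℚ) : ZMod p) = (X * redQ p f).coeff k := by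
  cases k with
  | zero => simp [mul_coeff_zero, coeff_X_zero]
  | succ k => rw [coeff_X_mul, coeff_X_mul, redQ_coeff]

lemma my_pInt_coeff_X_mul (f : Polynomial ℚ) (hf : ∀ j, pInt p (f.coeff j)) (k : ℕ) :
    pInt p ((X * f).coeff k) := by
  cases k with
  | zero =>
    rw [mul_coeff_zero, coeff_X_zero, zero_mul]
    exact my_pInt_zero p
  | succ k =>
    rw [coeff_X_mul]
    exact hf k

end Aux

lemma legendre_coeff (n k : ℕ) : (legendreP (n + 2)).coeff k =
    ((n : ℚ) + 2)⁻¹ * ((2 * (n : ℚ) + 3) * (X * legendreP (n + 1)).coeff k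
      - ((n : ℚ) + 1) * (legendreP n).coeff k) := by
  conv_lhs => rw [legendreP]
  rw [mul_assoc (C (2 * (n : ℚ) + 3)) X, coeff_C_mul, coeff_sub, coeff_C_mul, coeff_C_mul]

section Main

variable (p : ℕ) [hpf : Fact p.Prime]

lemma my_pInt_legendre : ∀ n, n ≤ p - 1 → ∀ k, pInt p ((legendreP n).coeff k) := by
  intro n
  induction n using Nat.strong_induction_on with
  | _ n ih =>
    match n with
    | 0 =>
      intro _ k
      rw [show legendreP 0 = 1 from rfl, coeff_one]
      split
      · exact my_pInt_one p
      · exact my_pInt_zero p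
    | 1 =>
      intro _ k
      rw [show legendreP 1 = X from rfl, coeff_X]
      split
      · exact my_pInt_one p
      · exact my_pInt_zero p
    | (n + 2) =>
      intro hn k
      have hp2 : 2 ≤ p := hpf.out.two_le
      have h1 := ih (n + 1) (by omega) (by omega)
      have h0 := ih n (by omega) (by omega)
      rw [legendre_coeff]
      have hinv : pInt p (((n : ℚ) + 2)⁻¹) := by
        rw [show ((n : ℚ) + 2) = ((n + 2 : ℕ) : ℚ) by push_cast; ring]
        exact my_pInt_inv_natCast p (fun hd => absurd (Nat.le_of_dvd (by omega) hd) (by omega))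
      have hb : pInt p ((2 * (n : ℚ) + 3)) := by
        rw [show (2 * (n : ℚ) + 3) = ((2 * n + 3 : ℕ) : ℚ) by push_cast; ring]
        exact my_pInt_natCast p _
      have hc : pInt p (((n : ℚ) + 1)) := by
        rw [show ((n : ℚ) + 1) = ((n + 1 : ℕ) : ℚ) by push_cast; ring]
        exact my_pInt_natCast p _
      exact my_pInt_mul p hinv (my_pInt_sub p
        (my_pInt_mul p hb (my_pInt_coeff_X_mul p _ h1 k))
        (my_pInt_mul p hc (h0 k)))

/-- The reduced three-term recurrence, in multiplied form. -/
lemma my_red_rec (n : ℕ) (hn : n + 2 ≤ p - 1) :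
    C (((n + 2 : ℕ)) : ZMod p) * redQ p (legendreP (n + 2)) =
      C (((2 * n + 3 : ℕ)) : ZMod p) * X * redQ p (legendreP (n + 1))
        - C (((n + 1 : ℕ)) : ZMod p) * redQ p (legendreP n) := by
  have hp2 : 2 ≤ p := hpf.out.two_le
  have h1 := my_pInt_legendre p (n + 1) (by omega)
  have h0 := my_pInt_legendre p n (by omega)
  ext k
  rw [coeff_C_mul, redQ_coeff, legendre_coeff, coeff_sub, coeff_C_mul, redQ_coeff,
    mul_assoc (C ((2 * n + 3 : ℕ) : ZMod p)) X, coeff_C_mul]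
  have hXc : pInt p ((X * legendreP (n + 1)).coeff k) := my_pInt_coeff_X_mul p _ h1 k
  have hinv : pInt p (((n : ℚ) + 2)⁻¹) := by
    rw [show ((n : ℚ) + 2) = ((n + 2 : ℕ) : ℚ) by push_cast; ring]
    exact my_pInt_inv_natCast p (fun hd => absurd (Nat.le_of_dvd (by omega) hd) (by omega))
  have hb : pInt p ((2 * (n : ℚ) + 3)) := by
    rw [show (2 * (n : ℚ) + 3) = ((2 * n + 3 : ℕ) : ℚ) by push_cast; ring]
    exact my_pInt_natCast p _
  have hc : pInt p (((n : ℚ) + 1)) := by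
    rw [show ((n : ℚ) + 1) = ((n + 1 : ℕ) : ℚ) by push_cast; ring]
    exact my_pInt_natCast p _
  rw [my_cast_mul p hinv (my_pInt_sub p (my_pInt_mul p hb hXc) (my_pInt_mul p hc (h0 k))),
    my_cast_sub p (my_pInt_mul p hb hXc) (my_pInt_mul p hc (h0 k)),
    my_cast_mul p hb hXc, my_cast_mul p hc (h0 k)]
  rw [show ((n : ℚ) + 2) = ((n + 2 : ℕ) : ℚ) by push_cast; ring,
    my_cast_inv_natCast p (by omega) (by omega)]
  rw [show ((2 * (n : ℚ) + 3 : ℚ) : ZMod p) = ((2 * n + 3 : ℕ) : ZMod p) by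
      rw [show (2 * (n : ℚ) + 3) = ((2 * n + 3 : ℕ) : ℚ) by push_cast; ring, Rat.cast_natCast],
    show (((n : ℚ) + 1 : ℚ) : ZMod p) = ((n + 1 : ℕ) : ZMod p) by
      rw [show ((n : ℚ) + 1) = ((n + 1 : ℕ) : ℚ) by push_cast; ring, Rat.cast_natCast]]
  rw [my_cast_coeff_X_mul]
  have hne : (((n + 2 : ℕ)) : ZMod p) ≠ 0 := my_natCast_ne_zero p (by omega) (by omega)
  rw [← mul_assoc, mul_inv_cancel₀ hne, one_mul]

end Main

theorem legendre_sub_congr (p : ℕ) (hp : p.Prime) (hodd : Odd p) (m : ℕ)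
    (hm1 : 1 ≤ m) (hm2 : m ≤ (p - 1) / 2) (k : ℕ) :
    pCong p ((legendreP (p - 1 - m)).coeff k) ((legendreP m).coeff k) := by
  haveI : Fact p.Prime := ⟨hp⟩
  obtain ⟨h, hph⟩ : ∃ h, p = 2 * h + 1 := by
    obtain ⟨t, ht⟩ := hodd; exact ⟨t, by omega⟩
  have hh : (p - 1) / 2 = h := by omega
  rw [hh] at hm2
  have hp2 : 2 ≤ p := hp.two_le
  have hh1 : 1 ≤ h := by omega
  have hp0 : ((p : ZMod p)) = 0 := ZMod.natCast_self p
  -- key fact in (ZMod p)[X]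
  have key : ∀ d, ∀ m, 1 ≤ m → m ≤ h → h - m = d →
      redQ p (legendreP (p - 1 - m)) = redQ p (legendreP m) := by
    intro d
    induction d using Nat.strong_induction_on with
    | _ d ih =>
      intro m hm1 hm2 hd
      rcases Nat.lt_or_ge m h with hmh | hmh
      rcases Nat.lt_or_ge m (h - 1) with hmh2 | hmh2
      · -- m ≤ h - 2 : use recurrence at n = p - 3 - m and at n = m
        have hm3 : m + 2 ≤ h := by omega
        have e1 : redQ p (legendreP (p - 1 - (m + 1))) = redQ p (legendreP (m + 1)) :=
          ih (h - (m + 1)) (by omega) (m + 1) (by omega) (by omega) rfl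
        have e2 : redQ p (legendreP (p - 1 - (m + 2))) = redQ p (legendreP (m + 2)) :=
          ih (h - (m + 2)) (by omega) (m + 2) (by omega) (by omega) rfl
        have r1 := my_red_rec p (p - 3 - m) (by omega)
        have r2 := my_red_rec p m (by omega)
        have i0 : p - 3 - m + 2 = p - 1 - m := by omega
        have i1 : p - 3 - m + 1 = p - 1 - (m + 1) := by omega
        have i2 : p - 3 - m = p - 1 - (m + 2) := by omega
        rw [i0, i1, i2, e1, e2] at r1
        -- compute the nat casts mod p
        have c0 : (((p - 1 - m : ℕ)) : ZMod p) = -(((m + 1 : ℕ)) : ZMod p) := by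
          rw [show (p - 1 - m : ℕ) = p - (m + 1) by omega,
            Nat.cast_sub (by omega), hp0]; push_cast; ring
        have c1 : (((2 * (p - 1 - (m + 2)) + 3 : ℕ)) : ZMod p)
            = -(((2 * m + 3 : ℕ)) : ZMod p) := by
          rw [show (2 * (p - 1 - (m + 2)) + 3 : ℕ) = 2 * p - (2 * m + 3) by omega,
            Nat.cast_sub (by omega)]
          push_cast [hp0]; ring
        have c2 : (((p - 1 - (m + 1) : ℕ)) : ZMod p) = -(((m + 2 : ℕ)) : ZMod p) := by
          rw [show (p - 1 - (m + 1) : ℕ) = p - (m + 2) by omega,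
            Nat.cast_sub (by omega), hp0]; push_cast; ring
        rw [c0, c1, c2] at r1
        simp only [map_neg] at r1
        have hne : (((m + 1 : ℕ)) : ZMod p) ≠ 0 := my_natCast_ne_zero p (by omega) (by omega)
        have goal1 : C (((m + 1 : ℕ)) : ZMod p) * redQ p (legendreP (p - 1 - m)) =
            C (((m + 1 : ℕ)) : ZMod p) * redQ p (legendreP m) := by
          linear_combination -r1 - r2
        have hCne : C (((m + 1 : ℕ)) : ZMod p) ≠ 0 :=
          fun hC => hne (Polynomial.C_eq_zero.mp hC)
        exact mul_left_cancel₀ hCne goal1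
      · -- m = h - 1
        have hm : m = h - 1 := by omega
        have hh2 : 2 ≤ h := by omega
        have r1 := my_red_rec p (h - 1) (by omega)
        have i0 : h - 1 + 2 = h + 1 := by omega
        have i1 : h - 1 + 1 = h := by omega
        rw [i0, i1] at r1
        have c1 : (((2 * (h - 1) + 3 : ℕ)) : ZMod p) = 0 := by
          rw [show (2 * (h - 1) + 3 : ℕ) = p by omega, hp0]
        have hneg : (((h : ℕ)) : ZMod p) = -(((h + 1 : ℕ)) : ZMod p) := by
          have h2h : ((2 * h + 1 : ℕ) : ZMod p) = 0 := by rw [← hph, hp0]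
          push_cast at h2h ⊢
          linear_combination h2h
        have hne : (((h + 1 : ℕ)) : ZMod p) ≠ 0 := my_natCast_ne_zero p (by omega) (by omega)
        have goal1 : C (((h + 1 : ℕ)) : ZMod p) * redQ p (legendreP (h + 1)) =
            C (((h + 1 : ℕ)) : ZMod p) * redQ p (legendreP (h - 1)) := by
          rw [r1, c1, map_zero, zero_mul, zero_mul, zero_sub, hneg, map_neg, neg_mul, neg_neg]
        have idx : p - 1 - m = h + 1 := by omega
        rw [idx, hm]
        have hCne : C (((h + 1 : ℕ)) : ZMod p) ≠ 0 :=
          fun hC => hne (Polynomial.C_eq_zero.mp hC)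
        exact mul_left_cancel₀ hCne goal1
      · -- m = h
        have hm : m = h := le_antisymm hm2 hmh
        have : p - 1 - m = m := by omega
        rw [this]
  have hred := key (h - m) m hm1 hm2 rfl
  have hcast : (((legendreP (p - 1 - m)).coeff k : ℚ) : ZMod p)
      = (((legendreP m).coeff k : ℚ) : ZMod p) := by
    rw [← redQ_coeff, ← redQ_coeff, hred]
  exact my_pCong_of_cast_eq p
    (my_pInt_legendre p (p - 1 - m) (by omega) k)
    (my_pInt_legendre p m (by omega) k) hcast
end

section
/- Let p be an odd prime and let m be an integer with 0 \le m \le p-1. Then P_{p+m}(x) \equiv x^p P_m(x) (mod p), as polynomials with p-integral rational coefficients reduced modulo p. -/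
open Polynomial Finset
open scoped Nat

-- case 1: genuine range, n = 2j+d+1
lemma keyQ1 (j d : ℕ) :
    (2*j+d+3) * ((2*j+d+3).choose (j+1) * ((2*j+2*d+4).choose (2*j+d+3)))
      = 2*(4*j+2*d+5) * ((2*j+d+2).choose (j+1) * ((2*j+2*d+2).choose (2*j+d+2)))
      + 4*(2*j+d+2) * ((2*j+d+1).choose j * ((2*j+2*d+2).choose (2*j+d+1))) := by
  have h1 : (((2*j+d+3).choose (j+1)) : ℚ) = (2*j+d+3) ! / ((j+1) ! * (j+d+2) !) := by
    rw [Nat.cast_choose ℚ (by omega), show 2*j+d+3 - (j+1) = j+d+2 from by omega]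
  have h2 : (((2*j+2*d+4).choose (2*j+d+3)) : ℚ) = (2*j+2*d+4) ! / ((2*j+d+3) ! * (d+1) !) := by
    rw [Nat.cast_choose ℚ (by omega), show 2*j+2*d+4 - (2*j+d+3) = d+1 from by omega]
  have h3 : (((2*j+d+2).choose (j+1)) : ℚ) = (2*j+d+2) ! / ((j+1) ! * (j+d+1) !) := by
    rw [Nat.cast_choose ℚ (by omega), show 2*j+d+2 - (j+1) = j+d+1 from by omega]
  have h4 : (((2*j+2*d+2).choose (2*j+d+2)) : ℚ) = (2*j+2*d+2) ! / ((2*j+d+2) ! * d !) := by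
    rw [Nat.cast_choose ℚ (by omega), show 2*j+2*d+2 - (2*j+d+2) = d from by omega]
  have h5 : (((2*j+d+1).choose j) : ℚ) = (2*j+d+1) ! / (j ! * (j+d+1) !) := by
    rw [Nat.cast_choose ℚ (by omega), show 2*j+d+1 - j = j+d+1 from by omega]
  have h6 : (((2*j+2*d+2).choose (2*j+d+1)) : ℚ) = (2*j+2*d+2) ! / ((2*j+d+1) ! * (d+1) !) := by
    rw [Nat.cast_choose ℚ (by omega), show 2*j+2*d+2 - (2*j+d+1) = d+1 from by omega]
  have f1 : ((2*j+2*d+4) ! : ℚ) = (2*j+2*d+4)*(2*j+2*d+3)*((2*j+2*d+2) ! : ℚ) := by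
    rw [show 2*j+2*d+4 = (2*j+2*d+2)+1+1 by ring]
    push_cast [Nat.factorial_succ]; ring
  have f2 : ((2*j+d+3) ! : ℚ) = (2*j+d+3)*(2*j+d+2)*((2*j+d+1) ! : ℚ) := by
    rw [show 2*j+d+3 = (2*j+d+1)+1+1 by ring]
    push_cast [Nat.factorial_succ]; ring
  have f3 : ((2*j+d+2) ! : ℚ) = (2*j+d+2)*((2*j+d+1) ! : ℚ) := by
    rw [show 2*j+d+2 = (2*j+d+1)+1 by ring]
    push_cast [Nat.factorial_succ]; ring
  have f4 : ((j+1) ! : ℚ) = (j+1)*(j ! : ℚ) := by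
    push_cast [Nat.factorial_succ]; ring
  have f5 : ((j+d+2) ! : ℚ) = (j+d+2)*((j+d+1) ! : ℚ) := by
    rw [show j+d+2 = (j+d+1)+1 by ring]
    push_cast [Nat.factorial_succ]; ring
  have f6 : ((d+1) ! : ℚ) = (d+1)*(d ! : ℚ) := by
    push_cast [Nat.factorial_succ]; ring
  apply Nat.cast_injective (R := ℚ)
  push_cast
  rw [h1, h2, h3, h4, h5, h6, f1, f2, f3, f4, f5, f6]
  have n1 : ((2*j+2*d+2) ! : ℚ) ≠ 0 := Nat.cast_ne_zero.2 (Nat.factorial_ne_zero _)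
  have n2 : ((2*j+d+1) ! : ℚ) ≠ 0 := Nat.cast_ne_zero.2 (Nat.factorial_ne_zero _)
  have n3 : ((j+d+1) ! : ℚ) ≠ 0 := Nat.cast_ne_zero.2 (Nat.factorial_ne_zero _)
  have n4 : (j ! : ℚ) ≠ 0 := Nat.cast_ne_zero.2 (Nat.factorial_ne_zero _)
  have n5 : (d ! : ℚ) ≠ 0 := Nat.cast_ne_zero.2 (Nat.factorial_ne_zero _)
  have n6 : ((j:ℚ)+1) ≠ 0 := by positivity
  have n7 : ((d:ℚ)+1) ≠ 0 := by positivity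
  have n8 : ((j:ℚ)+(d:ℚ)+2) ≠ 0 := by positivity
  have n9 : (2*(j:ℚ)+(d:ℚ)+3) ≠ 0 := by positivity
  have n10 : (2*(j:ℚ)+(d:ℚ)+2) ≠ 0 := by positivity
  have n11 : (2*(j:ℚ)+(d:ℚ)+1) ≠ 0 := by positivity
  field_simp
  ring

-- case 2 : n = 2j
lemma keyQ2 (j : ℕ) : (2*j+2) * ((2*j+2).choose (j+1)) = 4*(2*j+1) * ((2*j).choose j) := by
  apply Nat.cast_injective (R := ℚ)
  push_cast
  have h1 : (((2*j+2).choose (j+1)) : ℚ) = (2*j+2) ! / ((j+1) ! * (j+1) !) := by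
    rw [Nat.cast_choose ℚ (by omega), show 2*j+2 - (j+1) = j+1 from by omega]
  have h2 : (((2*j).choose j) : ℚ) = (2*j) ! / (j ! * j !) := by
    rw [Nat.cast_choose ℚ (by omega), show 2*j - j = j from by omega]
  have f1 : ((2*j+2) ! : ℚ) = (2*j+2)*(2*j+1)*((2*j) ! : ℚ) := by
    rw [show 2*j+2 = (2*j)+1+1 by ring]
    push_cast [Nat.factorial_succ]; ring
  have f4 : ((j+1) ! : ℚ) = (j+1)*(j ! : ℚ) := by
    push_cast [Nat.factorial_succ]; ring
  rw [h1, h2, f1, f4]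
  have n1 : ((2*j) ! : ℚ) ≠ 0 := Nat.cast_ne_zero.2 (Nat.factorial_ne_zero _)
  have n4 : (j ! : ℚ) ≠ 0 := Nat.cast_ne_zero.2 (Nat.factorial_ne_zero _)
  have n6 : ((j:ℚ)+1) ≠ 0 := by positivity
  field_simp
  ring

/-- The main three-term coefficient identity, for index `k = j+1`. -/
lemma keyNat (n j : ℕ) :
    (n+2) * ((n+2).choose (j+1) * ((2*n+2-2*j).choose (n+2)))
      = 2*(2*n+3) * ((n+1).choose (j+1) * ((2*n-2*j).choose (n+1)))
      + 4*(n+1) * (n.choose j * ((2*n-2*j).choose n)) := by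
  rcases lt_trichotomy (2*j) n with h | h | h
  · obtain ⟨d, rfl⟩ : ∃ d, n = 2*j+d+1 := ⟨n - 2*j - 1, by omega⟩
    have e1 : 2*(2*j+d+1)+2-2*j = 2*j+2*d+4 := by omega
    have e2 : 2*(2*j+d+1)-2*j = 2*j+2*d+2 := by omega
    rw [e1, e2, show 2*j+d+1+2 = 2*j+d+3 from by omega, show 2*j+d+1+1 = 2*j+d+2 from by omega,
      show 2*(2*j+d+1)+3 = 4*j+2*d+5 from by omega]
    exact keyQ1 j d
  · subst h
    rw [show 2*(2*j)+2-2*j = 2*j+2 from by omega, show 2*(2*j)-2*j = 2*j from by omega,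
      Nat.choose_self, Nat.choose_eq_zero_of_lt (by omega : 2*j < 2*j+1)]
    simp only [Nat.choose_self, mul_one, mul_zero, zero_add]
    exact keyQ2 j
  · have hnc : n.choose j = 0 ∨ (2*n-2*j).choose n = 0 := by
      rcases Nat.eq_zero_or_pos n with rfl | hn
      · exact Or.inl (Nat.choose_eq_zero_of_lt (by omega))
      · exact Or.inr (Nat.choose_eq_zero_of_lt (by omega))
    rw [Nat.choose_eq_zero_of_lt (show 2*n+2-2*j < n+2 by omega),
      Nat.choose_eq_zero_of_lt (show 2*n-2*j < n+1 by omega)]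
    rcases hnc with h0 | h0 <;> rw [h0] <;> ring

/-- The `k = 0` identity. -/
lemma keyNat0 (n : ℕ) :
    (n+2) * ((2*n+4).choose (n+2)) = 2*(2*n+3) * ((2*n+2).choose (n+1)) := by
  have h1 := Nat.add_one_mul_choose_eq (2*n+3) (n+1)
  have h2 := Nat.add_one_mul_choose_eq (2*n+2) (n+1)
  -- h1 : (2n+4) * C(2n+3, n+1) = C(2n+4, n+2) * (n+2)
  -- h2 : (2n+3) * C(2n+2, n+1) = C(2n+3, n+2) * (n+2)
  have h3 : (2*n+3).choose (n+2) = (2*n+3).choose (n+1) := Nat.choose_symm_half (n+1)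
  rw [show 2*n+3+1 = 2*n+4 from by omega, show n+1+1 = n+2 from by omega] at h1
  rw [show 2*n+2+1 = 2*n+3 from by omega, show n+1+1 = n+2 from by omega] at h2
  apply Nat.eq_of_mul_eq_mul_left (show 0 < n+2 by omega)
  calc (n+2) * ((n+2) * (2*n+4).choose (n+2))
      = ((2*n+4).choose (n+2) * (n+2)) * (n+2) := by ring
    _ = ((2*n+4) * (2*n+3).choose (n+1)) * (n+2) := by rw [h1]
    _ = (2*n+4) * ((2*n+3).choose (n+2) * (n+2)) := by rw [← h3]; ring
    _ = (2*n+4) * ((2*n+3) * (2*n+2).choose (n+1)) := by rw [h2]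
    _ = (n+2) * (2*(2*n+3) * (2*n+2).choose (n+1)) := by ring

/-- The `k`-th term of the integer-normalized Legendre polynomial. -/
noncomputable def legT (n k : ℕ) : Polynomial ℤ :=
  C ((-1)^k * ((n.choose k : ℤ) * (((2*n - 2*k).choose n : ℕ) : ℤ))) * X^(n - 2*k)

/-- `2^n` times the Legendre polynomial, an integer polynomial. -/
noncomputable def legN (n : ℕ) : Polynomial ℤ := ∑ k ∈ range (n+1), legT n k

lemma legT_zero (n k : ℕ) (h : n < k) : legT n k = 0 := by
  unfold legT
  rw [Nat.choose_eq_zero_of_lt h]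
  simp

lemma legT_term (n k : ℕ) :
    C ((n:ℤ)+2) * legT (n+2) (k+1)
      = C (2*(2*(n:ℤ)+3)) * X * legT (n+1) (k+1) - C (4*((n:ℤ)+1)) * legT n k := by
  unfold legT
  rw [show 2*(n+2) - 2*(k+1) = 2*n+2-2*k from by omega,
      show 2*(n+1) - 2*(k+1) = 2*n-2*k from by omega]
  by_cases hk : 2*k+1 ≤ n
  · obtain ⟨e, he⟩ : ∃ e, n - 2*k = e + 1 := ⟨n - 2*k - 1, by omega⟩
    rw [show (n+2) - 2*(k+1) = e+1 from by omega, show (n+1) - 2*(k+1) = e from by omega, he]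
    have hN := keyNat n k
    have hZ := congrArg (Nat.cast : ℕ → ℤ) hN
    push_cast at hZ
    have S : ((n:ℤ)+2) * ((-1:ℤ)^(k+1) * (((n+2).choose (k+1) : ℤ) * (((2*n+2-2*k).choose (n+2) : ℕ) : ℤ)))
        = 2*(2*(n:ℤ)+3) * ((-1)^(k+1) * (((n+1).choose (k+1):ℤ) * (((2*n-2*k).choose (n+1) : ℕ):ℤ)))
          - 4*((n:ℤ)+1) * ((-1)^k * ((n.choose k:ℤ) * (((2*n-2*k).choose n : ℕ) : ℤ))) := by
      linear_combination ((-1:ℤ)^(k+1)) * hZ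
    have S' := congrArg C S
    simp only [map_mul, map_sub, map_add, map_pow, map_neg, map_one, map_ofNat] at S'
    simp only [map_mul, map_sub, map_add, map_pow, map_neg, map_one, map_ofNat]
    linear_combination (X:Polynomial ℤ)^(e+1) * S'
  · by_cases hk2 : 2*k = n
    · rw [show (n+2) - 2*(k+1) = 0 from by omega, show (n+1) - 2*(k+1) = 0 from by omega,
        show n - 2*k = 0 from by omega,
        Nat.choose_eq_zero_of_lt (show 2*n-2*k < n+1 by omega)]
      have hN := keyNat n k
      rw [Nat.choose_eq_zero_of_lt (show 2*n-2*k < n+1 by omega)] at hN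
      have hZ := congrArg (Nat.cast : ℕ → ℤ) hN
      push_cast at hZ
      have S : ((n:ℤ)+2) * ((-1:ℤ)^(k+1) * (((n+2).choose (k+1) : ℤ) * (((2*n+2-2*k).choose (n+2) : ℕ) : ℤ)))
          = 2*(2*(n:ℤ)+3) * ((-1)^(k+1) * (((n+1).choose (k+1):ℤ) * ((0 : ℕ):ℤ)))
            - 4*((n:ℤ)+1) * ((-1)^k * ((n.choose k:ℤ) * (((2*n-2*k).choose n : ℕ) : ℤ))) := by
        push_cast
        linear_combination ((-1:ℤ)^(k+1)) * hZ
      have S' := congrArg C S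
      simp only [Nat.cast_zero, map_mul, map_sub, map_add, map_pow, map_neg, map_one, map_ofNat,
        mul_zero, zero_mul, map_zero, sub_zero, zero_sub] at S'
      simp only [Nat.cast_zero, map_mul, map_sub, map_add, map_pow, map_neg, map_one, map_ofNat,
        mul_zero, zero_mul, map_zero, sub_zero, zero_sub]
      linear_combination S'
    · have hnc : n.choose k = 0 ∨ (2*n-2*k).choose n = 0 := by
        by_cases hkn : n < k
        · exact Or.inl (Nat.choose_eq_zero_of_lt hkn)
        · exact Or.inr (Nat.choose_eq_zero_of_lt (by omega))
      rw [Nat.choose_eq_zero_of_lt (show 2*n+2-2*k < n+2 by omega),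
        Nat.choose_eq_zero_of_lt (show 2*n-2*k < n+1 by omega)]
      rcases hnc with h0 | h0 <;> rw [h0] <;> simp

lemma legT_head (n : ℕ) :
    C ((n:ℤ)+2) * legT (n+2) 0 = C (2*(2*(n:ℤ)+3)) * X * legT (n+1) 0 := by
  unfold legT
  rw [show 2*(n+2) - 2*0 = 2*n+4 from by omega, show 2*(n+1) - 2*0 = 2*n+2 from by omega,
    show (n+2) - 2*0 = (n+1)+1 from by omega, show (n+1) - 2*0 = n+1 from by omega,
    Nat.choose_zero_right, Nat.choose_zero_right]
  have hZ := congrArg (Nat.cast : ℕ → ℤ) (keyNat0 n)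
  push_cast at hZ
  have S : ((n:ℤ)+2) * ((-1:ℤ)^0 * ((1:ℕ) * (((2*n+4).choose (n+2) : ℕ) : ℤ)))
      = 2*(2*(n:ℤ)+3) * ((-1:ℤ)^0 * ((1:ℕ) * (((2*n+2).choose (n+1) : ℕ) : ℤ))) := by
    push_cast
    linear_combination hZ
  have S' := congrArg C S
  simp only [Nat.cast_one, map_mul, map_add, map_pow, map_neg, map_one, map_ofNat, one_mul,
    pow_zero] at S'
  simp only [Nat.cast_one, map_mul, map_add, map_pow, map_neg, map_one, map_ofNat, one_mul,
    pow_zero]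
  linear_combination (X:Polynomial ℤ)^(n+1+1) * S'

lemma legN_rec (n : ℕ) :
    C ((n:ℤ)+2) * legN (n+2)
      = C (2*(2*(n:ℤ)+3)) * X * legN (n+1) - C (4*((n:ℤ)+1)) * legN n := by
  have l2 : legN (n+2) = ∑ k ∈ range (n+2+1), legT (n+2) k := rfl
  have l1 : legN (n+1) = ∑ k ∈ range (n+1+1), legT (n+1) k := rfl
  have l0 : legN n = ∑ k ∈ range (n+1), legT n k := rfl
  rw [l2, l1, l0, Finset.mul_sum, Finset.mul_sum, Finset.mul_sum]
  rw [Finset.sum_range_succ' (fun k => C ((n:ℤ)+2) * legT (n+2) k) (n+2)]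
  rw [Finset.sum_range_succ' (fun k => C (2*(2*(n:ℤ)+3)) * X * legT (n+1) k) (n+1)]
  -- pad the (n+1) shifted sum with a zero term at k = n+1
  have pad1 : ∑ k ∈ range (n+2), C (2*(2*(n:ℤ)+3)) * X * legT (n+1) (k+1)
      = ∑ k ∈ range (n+1), C (2*(2*(n:ℤ)+3)) * X * legT (n+1) (k+1) := by
    rw [Finset.sum_range_succ, legT_zero (n+1) (n+1+1) (by omega)]
    simp
  -- pad the legN n sum with a zero term at k = n+1
  have pad0 : ∑ k ∈ range (n+1), C (4*((n:ℤ)+1)) * legT n k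
      = ∑ k ∈ range (n+2), C (4*((n:ℤ)+1)) * legT n k := by
    rw [Finset.sum_range_succ (fun k => C (4*((n:ℤ)+1)) * legT n k) (n+1),
      legT_zero n (n+1) (by omega)]
    simp
  rw [pad0, ← pad1]
  have main : ∑ k ∈ range (n+2), C ((n:ℤ)+2) * legT (n+2) (k+1)
      = (∑ k ∈ range (n+2), C (2*(2*(n:ℤ)+3)) * X * legT (n+1) (k+1))
        - ∑ k ∈ range (n+2), C (4*((n:ℤ)+1)) * legT n k := by
    rw [← Finset.sum_sub_distrib]
    exact Finset.sum_congr rfl fun k _ => legT_term n k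
  rw [main, legT_head n]
  ring

lemma legN_zero : legN 0 = 1 := by
  unfold legN legT
  simp

lemma legN_one : legN 1 = C 2 * X := by
  unfold legN legT
  rw [Finset.sum_range_succ, Finset.sum_range_succ, Finset.sum_range_zero]
  norm_num

lemma legN_clo : ∀ n : ℕ, C ((2:ℚ)^n) * legendreP n = (legN n).map (Int.castRingHom ℚ)
  | 0 => by
      rw [legN_zero, legendreP]
      simp
  | 1 => by
      rw [legN_one, legendreP]
      simp [map_ofNat]
  | (n+2) => by
      have ih0 := legN_clo n
      have ih1 := legN_clo (n+1)
      have hR := congrArg (Polynomial.map (Int.castRingHom ℚ)) (legN_rec n)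
      simp only [Polynomial.map_mul, Polynomial.map_sub, Polynomial.map_C, Polynomial.map_X,
        Int.coe_castRingHom] at hR
      push_cast at hR
      -- hR : C ((n:ℚ)+2) * M₂ = C (2*(2*n+3)) * X * M₁ - C (4*(n+1)) * M₀
      rw [legendreP]
      have hw : ((n:ℚ)+2) ≠ 0 := by positivity
      apply mul_left_cancel₀ (Polynomial.C_ne_zero.mpr hw)
      have e1 : C ((2:ℚ)^(n+2)) * (C (2*(n:ℚ)+3) * X * legendreP (n+1))
          = C (2*(2*(n:ℚ)+3)) * X * ((legN (n+1)).map (Int.castRingHom ℚ)) := by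
        rw [← ih1]
        calc C ((2:ℚ)^(n+2)) * (C (2*(n:ℚ)+3) * X * legendreP (n+1))
            = C ((2:ℚ)^(n+2) * (2*(n:ℚ)+3)) * (X * legendreP (n+1)) := by
              rw [C_mul]; ring
          _ = C ((2*(2*(n:ℚ)+3)) * (2:ℚ)^(n+1)) * (X * legendreP (n+1)) := by
              rw [show (2:ℚ)^(n+2) * (2*(n:ℚ)+3) = (2*(2*(n:ℚ)+3)) * (2:ℚ)^(n+1) from by ring]
          _ = C (2*(2*(n:ℚ)+3)) * X * (C ((2:ℚ)^(n+1)) * legendreP (n+1)) := by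
              rw [C_mul]; ring
      have e0 : C ((2:ℚ)^(n+2)) * (C ((n:ℚ)+1) * legendreP n)
          = C (4*((n:ℚ)+1)) * ((legN n).map (Int.castRingHom ℚ)) := by
        rw [← ih0]
        calc C ((2:ℚ)^(n+2)) * (C ((n:ℚ)+1) * legendreP n)
            = C ((2:ℚ)^(n+2) * ((n:ℚ)+1)) * legendreP n := by rw [C_mul]; ring
          _ = C ((4*((n:ℚ)+1)) * (2:ℚ)^n) * legendreP n := by
              rw [show (2:ℚ)^(n+2) * ((n:ℚ)+1) = (4*((n:ℚ)+1)) * (2:ℚ)^n from by ring]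
          _ = C (4*((n:ℚ)+1)) * (C ((2:ℚ)^n) * legendreP n) := by rw [C_mul]; ring
      calc C ((n:ℚ)+2) * (C ((2:ℚ)^(n+2)) * (C ((n + 2 : ℚ))⁻¹ *
              (C (2 * (n : ℚ) + 3) * X * legendreP (n + 1) - C ((n : ℚ) + 1) * legendreP n)))
          = C (((n:ℚ)+2) * ((n + 2 : ℚ))⁻¹) * (C ((2:ℚ)^(n+2)) *
              (C (2 * (n : ℚ) + 3) * X * legendreP (n + 1) - C ((n : ℚ) + 1) * legendreP n)) := by
            rw [C_mul]; ring
        _ = C ((2:ℚ)^(n+2)) * (C (2 * (n : ℚ) + 3) * X * legendreP (n + 1))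
              - C ((2:ℚ)^(n+2)) * (C ((n : ℚ) + 1) * legendreP n) := by
            rw [mul_inv_cancel₀ hw, C_1, one_mul, mul_sub]
        _ = C (2*(2*(n:ℚ)+3)) * X * ((legN (n+1)).map (Int.castRingHom ℚ))
              - C (4*((n:ℚ)+1)) * ((legN n).map (Int.castRingHom ℚ)) := by
            rw [e1, e0]
        _ = C ((n:ℚ)+2) * ((legN (n+2)).map (Int.castRingHom ℚ)) := hR.symm

lemma zchoose_p (p : ℕ) (hp : p.Prime) {k : ℕ} (h1 : k ≠ 0) (h2 : k < p) :
    ((p.choose k : ℕ) : ZMod p) = 0 :=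
  (ZMod.natCast_eq_zero_iff _ _).mpr (hp.dvd_choose_self h1 h2)

lemma zchoose_p1 (p : ℕ) (hp : p.Prime) {k : ℕ} (h1 : 2 ≤ k) (h2 : k ≤ p-1) :
    (((p+1).choose k : ℕ) : ZMod p) = 0 := by
  have hp2 := hp.two_le
  obtain ⟨j, rfl⟩ : ∃ j, k = j+1 := ⟨k-1, by omega⟩
  rw [Nat.choose_succ_succ]
  push_cast
  rw [zchoose_p p hp (by omega) (by omega), zchoose_p p hp (by omega) (by omega), add_zero]

lemma V1 (p : ℕ) (hp : p.Prime) : (((p+p).choose p : ℕ) : ZMod p) = 2 := by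
  have hp2 := hp.two_le
  rw [Nat.add_choose_eq, Finset.Nat.sum_antidiagonal_eq_sum_range_succ_mk]
  push_cast
  simp only [Nat.succ_eq_add_one]
  rw [show p+1 = (p-1)+1+1 from by omega, Finset.sum_range_succ, Finset.sum_range_succ']
  have h0 : ∀ k ∈ range (p-1),
      ((p.choose (k+1) : ℕ) : ZMod p) * ((p.choose (p-(k+1)) : ℕ) : ZMod p) = 0 := by
    intro k hk
    rw [Finset.mem_range] at hk
    rw [zchoose_p p hp (by omega) (by omega), zero_mul]
  rw [Finset.sum_congr rfl h0, Finset.sum_const_zero]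
  rw [show p-1+1 = p from by omega, Nat.sub_self, Nat.sub_zero, Nat.choose_self,
    Nat.choose_zero_right]
  norm_num

lemma V3 (p : ℕ) (hp : p.Prime) : (((p+p).choose (p+1) : ℕ) : ZMod p) = 0 := by
  have hp2 := hp.two_le
  rw [Nat.add_choose_eq, Finset.Nat.sum_antidiagonal_eq_sum_range_succ_mk]
  push_cast
  apply Finset.sum_eq_zero
  intro k hk
  rcases Nat.eq_zero_or_pos k with rfl | hk0
  · have hz : p.choose (p+1-0) = 0 := Nat.choose_eq_zero_of_lt (by omega)
    rw [hz, Nat.cast_zero, mul_zero]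
  by_cases h1 : k < p
  · rw [zchoose_p p hp (by omega) h1, zero_mul]
  by_cases h2 : k = p
  · rw [h2, show p+1-p = 1 from by omega, Nat.choose_one_right, ZMod.natCast_self, mul_zero]
  · rw [Finset.mem_range] at hk
    simp only [Nat.succ_eq_add_one] at hk
    have h3 : k = p+1 := by omega
    rw [h3, Nat.choose_eq_zero_of_lt (by omega), Nat.cast_zero, zero_mul]

lemma V2 (p : ℕ) (hp : p.Prime) (hodd : Odd p) :
    ((((p+1)+(p+1)).choose (p+1) : ℕ) : ZMod p) = 4 := by
  have hp2 := hp.two_le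
  have hp3 : 3 ≤ p := by
    rcases hodd with ⟨t, ht⟩
    omega
  rw [Nat.add_choose_eq, Finset.Nat.sum_antidiagonal_eq_sum_range_succ_mk]
  push_cast
  simp only [Nat.succ_eq_add_one]
  rw [show p+1+1 = (p-3)+1+1+1+1+1 from by omega, Finset.sum_range_succ, Finset.sum_range_succ,
    Finset.sum_range_succ', Finset.sum_range_succ']
  have h0 : ∀ k ∈ range (p-3+1),
      (((p+1).choose (k+1+1) : ℕ) : ZMod p) * (((p+1).choose (p+1-(k+1+1)) : ℕ) : ZMod p) = 0 := by
    intro k hk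
    rw [Finset.mem_range] at hk
    rw [zchoose_p1 p hp (by omega) (by omega), zero_mul]
  rw [Finset.sum_congr rfl h0, Finset.sum_const_zero]
  rw [show p-3+1+1+1+1 = p+1 from by omega, show p-3+1+1+1 = p from by omega,
    show p+1-(p+1) = 0 from by omega, show p+1-p = 1 from by omega,
    show p+1-(0+1) = p from by omega, show p+1-0 = p+1 from by omega]
  rw [Nat.choose_self, Nat.choose_zero_right, Nat.choose_one_right,
    Nat.choose_succ_self_right]
  push_cast
  rw [ZMod.natCast_self]
  ring

lemma base0 (p : ℕ) (hp : p.Prime) :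
    (legN p).map (Int.castRingHom (ZMod p)) = C (2 : ZMod p) * X^p := by
  have hp2 := hp.two_le
  have hleg : legN p = ∑ k ∈ range (p+1), legT p k := rfl
  rw [hleg, Polynomial.map_sum, Finset.sum_range_succ']
  have h0 : ∀ k ∈ range p, (legT p (k+1)).map (Int.castRingHom (ZMod p)) = 0 := by
    intro k hk
    rw [Finset.mem_range] at hk
    unfold legT
    rw [Polynomial.map_mul, Polynomial.map_C, Polynomial.map_pow, Polynomial.map_X]
    by_cases hkp : k+1 = p
    · have hz : (2*p - 2*(k+1)).choose p = 0 := by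
        rw [hkp, show 2*p - 2*p = 0 from by omega]
        exact Nat.choose_eq_zero_of_lt (by omega)
      rw [hz]
      push_cast
      simp
    · have hcz : ((Int.castRingHom (ZMod p))
          ((-1)^(k+1) * ((p.choose (k+1) : ℤ) * (((2*p - 2*(k+1)).choose p : ℕ) : ℤ)))) = 0 := by
        have hz := zchoose_p p hp (show k+1 ≠ 0 by omega) (by omega)
        simp only [map_mul, map_pow, map_neg, map_one, Int.coe_castRingHom]
        push_cast
        rw [hz]
        ring
      rw [hcz, map_zero, zero_mul]
  rw [Finset.sum_congr rfl h0, Finset.sum_const_zero, zero_add]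
  unfold legT
  rw [Polynomial.map_mul, Polynomial.map_C, Polynomial.map_pow, Polynomial.map_X]
  rw [show 2*p - 2*0 = p + p from by omega, show p - 2*0 = p from by omega,
    Nat.choose_zero_right]
  have hV := V1 p hp
  congr 1
  simp only [map_mul, map_pow, map_neg, map_one, Int.coe_castRingHom]
  push_cast
  rw [hV]
  norm_num

lemma base1 (p : ℕ) (hp : p.Prime) (hodd : Odd p) :
    (legN (p+1)).map (Int.castRingHom (ZMod p)) = C (4 : ZMod p) * X^(p+1) := by
  have hp2 := hp.two_le
  have hp3 : 3 ≤ p := by rcases hodd with ⟨t, ht⟩; omega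
  have hleg : legN (p+1) = ∑ k ∈ range (p+1+1), legT (p+1) k := rfl
  rw [hleg, Polynomial.map_sum, Finset.sum_range_succ']
  have h0 : ∀ k ∈ range (p+1), (legT (p+1) (k+1)).map (Int.castRingHom (ZMod p)) = 0 := by
    intro k hk
    rw [Finset.mem_range] at hk
    unfold legT
    rw [Polynomial.map_mul, Polynomial.map_C, Polynomial.map_pow, Polynomial.map_X]
    rcases Nat.eq_zero_or_pos k with rfl | hk0
    · -- k+1 = 1 : second binomial is C(2p, p+1) ≡ 0
      have hz := V3 p hp
      have e : 2*(p+1) - 2*(0+1) = p + p := by omega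
      rw [e]
      have hcz : ((Int.castRingHom (ZMod p))
          ((-1)^(0+1) * (((p+1).choose (0+1) : ℤ) * (((p+p).choose (p+1) : ℕ) : ℤ)))) = 0 := by
        simp only [map_mul, map_pow, map_neg, map_one, Int.coe_castRingHom]
        push_cast
        rw [hz]
        ring
      rw [hcz, map_zero, zero_mul]
    by_cases h1 : k+1 ≤ p-1
    · have hz := zchoose_p1 p hp (show 2 ≤ k+1 by omega) h1
      have hcz : ((Int.castRingHom (ZMod p))
          ((-1)^(k+1) * (((p+1).choose (k+1) : ℤ) * (((2*(p+1) - 2*(k+1)).choose (p+1) : ℕ) : ℤ)))) = 0 := by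
        simp only [map_mul, map_pow, map_neg, map_one, Int.coe_castRingHom]
        push_cast
        rw [hz]
        ring
      rw [hcz, map_zero, zero_mul]
    by_cases h2 : k+1 = p
    · have hz : (2*(p+1) - 2*(k+1)).choose (p+1) = 0 := by
        rw [h2]
        exact Nat.choose_eq_zero_of_lt (by omega)
      rw [hz]
      push_cast
      simp
    · have h3 : k+1 = p+1 := by omega
      have hz : (2*(p+1) - 2*(k+1)).choose (p+1) = 0 := by
        rw [h3]
        exact Nat.choose_eq_zero_of_lt (by omega)
      rw [hz]
      push_cast
      simp
  rw [Finset.sum_congr rfl h0, Finset.sum_const_zero, zero_add]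
  unfold legT
  rw [Polynomial.map_mul, Polynomial.map_C, Polynomial.map_pow, Polynomial.map_X]
  rw [show 2*(p+1) - 2*0 = (p+1) + (p+1) from by omega, show (p+1) - 2*0 = p+1 from by omega,
    Nat.choose_zero_right]
  have hV := V2 p hp hodd
  congr 1
  simp only [map_mul, map_pow, map_neg, map_one, Int.coe_castRingHom]
  push_cast
  rw [hV]
  norm_num

lemma schurN (p : ℕ) (hp : p.Prime) (hodd : Odd p) :
    ∀ m, m ≤ p - 1 →
      (legN (p+m)).map (Int.castRingHom (ZMod p))
        = C (2 : ZMod p) * X^p * (legN m).map (Int.castRingHom (ZMod p))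
  | 0, _ => by
      rw [Nat.add_zero, legN_zero, base0 p hp]
      simp
  | 1, _ => by
      rw [base1 p hp hodd, legN_one]
      rw [Polynomial.map_mul, Polynomial.map_C, Polynomial.map_X]
      rw [show ((4:ZMod p)) = 2 * 2 from by norm_num, C_mul]
      have : ((Int.castRingHom (ZMod p)) (2:ℤ)) = (2 : ZMod p) := by norm_num
      rw [this]
      ring
  | (m+2), h => by
      haveI : Fact p.Prime := ⟨hp⟩
      have hp2 := hp.two_le
      have ih0 := schurN p hp hodd m (by omega)
      have ih1 := schurN p hp hodd (m+1) (by omega)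
      rw [show p + (m+1) = (p+m)+1 from by omega] at ih1
      have hR := congrArg (Polynomial.map (Int.castRingHom (ZMod p))) (legN_rec (p+m))
      have hR2 := congrArg (Polynomial.map (Int.castRingHom (ZMod p))) (legN_rec m)
      simp only [Polynomial.map_mul, Polynomial.map_sub, Polynomial.map_C, Polynomial.map_X,
        Int.coe_castRingHom] at hR hR2
      push_cast at hR hR2
      simp only [ZMod.natCast_self, zero_add] at hR
      rw [show p + (m+2) = (p+m)+2 from by omega]
      have hcan : (C (((m:ZMod p))+2)) ≠ 0 := by
        rw [Ne, Polynomial.C_eq_zero]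
        intro h0
        have hmz : (((m+2 : ℕ)) : ZMod p) = 0 := by push_cast; linear_combination h0
        rw [ZMod.natCast_eq_zero_iff] at hmz
        have := Nat.le_of_dvd (by omega) hmz
        omega
      apply mul_left_cancel₀ hcan
      calc C ((m:ZMod p)+2) * (legN ((p+m)+2)).map (Int.castRingHom (ZMod p))
          = C (2*(2*(m:ZMod p)+3)) * X * (legN ((p+m)+1)).map (Int.castRingHom (ZMod p))
            - C (4*((m:ZMod p)+1)) * (legN (p+m)).map (Int.castRingHom (ZMod p)) := by
            linear_combination hR
        _ = C (2*(2*(m:ZMod p)+3)) * X * (C (2:ZMod p) * X^p * (legN (m+1)).map (Int.castRingHom (ZMod p)))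
            - C (4*((m:ZMod p)+1)) * (C (2:ZMod p) * X^p * (legN m).map (Int.castRingHom (ZMod p))) := by
            rw [ih0, ih1]
        _ = C (2:ZMod p) * X^p * (C (2*(2*(m:ZMod p)+3)) * X * (legN (m+1)).map (Int.castRingHom (ZMod p))
            - C (4*((m:ZMod p)+1)) * (legN m).map (Int.castRingHom (ZMod p))) := by
            ring
        _ = C (2:ZMod p) * X^p * (C ((m:ZMod p)+2) * (legN (m+2)).map (Int.castRingHom (ZMod p))) := by
            linear_combination (C (2:ZMod p) * (X:Polynomial (ZMod p))^p) * hR2.symm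
        _ = C ((m:ZMod p)+2) * (C (2:ZMod p) * X^p * (legN (m+2)).map (Int.castRingHom (ZMod p))) := by
            ring

theorem legendre_add_p_congr (p : ℕ) (hp : p.Prime) (hodd : Odd p) (m : ℕ)
    (hm : m ≤ p - 1) (k : ℕ) :
    pCong p ((legendreP (p + m)).coeff k) ((X ^ p * legendreP m).coeff k) := by
  haveI : Fact p.Prime := ⟨hp⟩
  have hp2 := hp.two_le
  have h2 : ((2:ℚ)^(p+m)) ≠ 0 := by positivity
  set A : ℤ := (legN (p+m)).coeff k with hA_def
  set B : ℤ := (C ((2:ℤ)^p) * X^p * legN m).coeff k with hB_def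
  -- coefficient formulas over ℚ
  have hA : (2:ℚ)^(p+m) * (legendreP (p+m)).coeff k = (A : ℚ) := by
    have := congrArg (fun q => Polynomial.coeff q k) (legN_clo (p+m))
    simpa only [Polynomial.coeff_C_mul, Polynomial.coeff_map, Int.coe_castRingHom] using this
  have hq : C ((2:ℚ)^(p+m)) * (X^p * legendreP m)
      = (C ((2:ℤ)^p) * X^p * legN m).map (Int.castRingHom ℚ) := by
    rw [Polynomial.map_mul, Polynomial.map_mul, Polynomial.map_C, Polynomial.map_pow,
      Polynomial.map_X, ← legN_clo m]
    simp only [Int.coe_castRingHom]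
    push_cast
    rw [pow_add, C_mul]
    ring
  have hB : (2:ℚ)^(p+m) * (X^p * legendreP m).coeff k = (B : ℚ) := by
    have := congrArg (fun q => Polynomial.coeff q k) hq
    simpa only [Polynomial.coeff_C_mul, Polynomial.coeff_map, Int.coe_castRingHom] using this
  -- the mod-p congruence
  have hmap : (legN (p+m)).map (Int.castRingHom (ZMod p))
      = (C ((2:ℤ)^p) * X^p * legN m).map (Int.castRingHom (ZMod p)) := by
    rw [schurN p hp hodd m hm, Polynomial.map_mul, Polynomial.map_mul, Polynomial.map_C,
      Polynomial.map_pow, Polynomial.map_X]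
    simp only [Int.coe_castRingHom]
    push_cast
    rw [ZMod.pow_card]
  have hAB : ((A - B : ℤ) : ZMod p) = 0 := by
    have := congrArg (fun q => Polynomial.coeff q k) hmap
    simp only [Polynomial.coeff_map, Int.coe_castRingHom] at this
    push_cast
    rw [this]
    ring
  obtain ⟨t, ht⟩ : (p:ℤ) ∣ A - B := (ZMod.intCast_zmod_eq_zero_iff_dvd _ p).mp hAB
  refine ⟨Rat.divInt t ((2:ℤ)^(p+m)), ?_, ?_⟩
  · intro hdvd
    have hd1 : ((Rat.divInt t ((2:ℤ)^(p+m))).den : ℤ) ∣ (2:ℤ)^(p+m) := Rat.den_dvd t _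
    have hd2 : (p:ℤ) ∣ (2:ℤ)^(p+m) := dvd_trans (Int.natCast_dvd_natCast.mpr hdvd) hd1
    have hd3 : p ∣ 2^(p+m) := by exact_mod_cast hd2
    have hd4 : p ∣ 2 := hp.dvd_of_dvd_pow hd3
    have hd5 : p = 2 := (Nat.prime_dvd_prime_iff_eq hp Nat.prime_two).mp hd4
    rcases hodd with ⟨u, hu⟩
    omega
  · have htq := congrArg (Int.cast : ℤ → ℚ) ht
    push_cast at htq
    have key : ((legendreP (p+m)).coeff k - (X^p * legendreP m).coeff k) * (2:ℚ)^(p+m)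
        = (p:ℚ) * (t:ℚ) := by
      linear_combination hA - hB + htq
    rw [Rat.divInt_eq_div]
    push_cast
    field_simp
    linear_combination key
end

section
/- Let p be an odd prime and let a, t be p-integral rational numbers with t \not\equiv 0, 1 (mod p). Then \sum_{k=0}^{p-1} \binom{a}{k}^2 t^k \equiv (t-1)^{\langle a \rangle_p} \sum_{k=0}^{p-1} \binom{a}{k} \binom{-1-a}{k} (1-t)^{-k} (mod p). -/
open Finset

section Helpers

variable {p : ℕ} [hp : Fact p.Prime]

private instance : NeZero p := ⟨hp.out.ne_zero⟩

lemma pInt_iff {r : ℚ} : pInt p r ↔ ((r.den : ZMod p) ≠ 0) := by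
  rw [pInt, Ne, ZMod.natCast_eq_zero_iff]

lemma pInt_natCast (n : ℕ) : pInt p (n : ℚ) := by
  rw [pInt_iff, Rat.den_natCast, Nat.cast_one]
  exact one_ne_zero

lemma pInt_intCast (n : ℤ) : pInt p (n : ℚ) := by
  rw [pInt_iff, Rat.den_intCast, Nat.cast_one]
  exact one_ne_zero

lemma pInt_one : pInt p (1 : ℚ) := by
  simpa using pInt_natCast (p := p) 1

lemma pInt_add {q r : ℚ} (hq : pInt p q) (hr : pInt p r) : pInt p (q + r) := by
  intro h
  rcases (Nat.Prime.dvd_mul hp.out).mp (h.trans (Rat.add_den_dvd q r)) with h' | h'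
  · exact hq h'
  · exact hr h'

lemma pInt_mul {q r : ℚ} (hq : pInt p q) (hr : pInt p r) : pInt p (q * r) := by
  intro h
  rcases (Nat.Prime.dvd_mul hp.out).mp (h.trans (Rat.mul_den_dvd q r)) with h' | h'
  · exact hq h'
  · exact hr h'

lemma pInt_neg {q : ℚ} (hq : pInt p q) : pInt p (-q) := by
  rwa [pInt, Rat.den_neg_eq_den]

lemma pInt_sub {q r : ℚ} (hq : pInt p q) (hr : pInt p r) : pInt p (q - r) := by
  rw [sub_eq_add_neg]; exact pInt_add hq (pInt_neg hr)

lemma pInt_sum {ι : Type*} {s : Finset ι} {f : ι → ℚ} (h : ∀ i ∈ s, pInt p (f i)) :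
    pInt p (∑ i ∈ s, f i) := by
  classical
  induction s using Finset.cons_induction with
  | empty => simpa using pInt_natCast (p := p) 0
  | cons i s his ih =>
      rw [Finset.sum_cons]
      exact pInt_add (h i (Finset.mem_cons_self i s))
        (ih fun j hj => h j (Finset.mem_cons_of_mem hj))

lemma pInt_prod {ι : Type*} {s : Finset ι} {f : ι → ℚ} (h : ∀ i ∈ s, pInt p (f i)) :
    pInt p (∏ i ∈ s, f i) := by
  classical
  induction s using Finset.cons_induction with
  | empty => simpa using pInt_one (p := p)
  | cons i s his ih =>
      rw [Finset.prod_cons]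
      exact pInt_mul (h i (Finset.mem_cons_self i s))
        (ih fun j hj => h j (Finset.mem_cons_of_mem hj))

lemma pInt_pow {q : ℚ} (hq : pInt p q) (k : ℕ) : pInt p (q ^ k) := by
  induction k with
  | zero => simpa using pInt_one (p := p)
  | succ k ih => rw [pow_succ]; exact pInt_mul ih hq

lemma pcast_add {q r : ℚ} (hq : pInt p q) (hr : pInt p r) :
    ((q + r : ℚ) : ZMod p) = (q : ZMod p) + (r : ZMod p) :=
  Rat.cast_add_of_ne_zero (pInt_iff.mp hq) (pInt_iff.mp hr)

lemma pcast_mul {q r : ℚ} (hq : pInt p q) (hr : pInt p r) :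
    ((q * r : ℚ) : ZMod p) = (q : ZMod p) * (r : ZMod p) :=
  Rat.cast_mul_of_ne_zero (pInt_iff.mp hq) (pInt_iff.mp hr)

lemma pcast_sub {q r : ℚ} (hq : pInt p q) (hr : pInt p r) :
    ((q - r : ℚ) : ZMod p) = (q : ZMod p) - (r : ZMod p) :=
  Rat.cast_sub_of_ne_zero (pInt_iff.mp hq) (pInt_iff.mp hr)

lemma pcast_pow {q : ℚ} (hq : pInt p q) (k : ℕ) :
    ((q ^ k : ℚ) : ZMod p) = (q : ZMod p) ^ k := by
  induction k with
  | zero => simp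
  | succ k ih => rw [pow_succ, pcast_mul (pInt_pow hq k) hq, ih, pow_succ]

lemma pcast_sum {ι : Type*} {s : Finset ι} {f : ι → ℚ} (h : ∀ i ∈ s, pInt p (f i)) :
    ((∑ i ∈ s, f i : ℚ) : ZMod p) = ∑ i ∈ s, ((f i : ℚ) : ZMod p) := by
  classical
  induction s using Finset.cons_induction with
  | empty => simp
  | cons i s his ih =>
      rw [Finset.sum_cons, Finset.sum_cons,
        pcast_add (h i (Finset.mem_cons_self i s))
          (pInt_sum fun j hj => h j (Finset.mem_cons_of_mem hj)),
        ih fun j hj => h j (Finset.mem_cons_of_mem hj)]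

lemma pcast_prod {ι : Type*} {s : Finset ι} {f : ι → ℚ} (h : ∀ i ∈ s, pInt p (f i)) :
    ((∏ i ∈ s, f i : ℚ) : ZMod p) = ∏ i ∈ s, ((f i : ℚ) : ZMod p) := by
  classical
  induction s using Finset.cons_induction with
  | empty => simp
  | cons i s his ih =>
      rw [Finset.prod_cons, Finset.prod_cons,
        pcast_mul (h i (Finset.mem_cons_self i s))
          (pInt_prod fun j hj => h j (Finset.mem_cons_of_mem hj)),
        ih fun j hj => h j (Finset.mem_cons_of_mem hj)]

lemma pcast_num_ne_zero {r : ℚ} (h : pInt p r) (h0 : (r : ZMod p) ≠ 0) :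
    ((r.num : ZMod p) ≠ 0) := by
  rw [Rat.cast_def] at h0
  intro hn
  exact h0 (by rw [hn, zero_div])

lemma pInt_inv {r : ℚ} (h : pInt p r) (h0 : (r : ZMod p) ≠ 0) : pInt p r⁻¹ := by
  have hnum : ¬ ((p : ℤ) ∣ r.num) := by
    intro hd
    exact pcast_num_ne_zero h h0 ((ZMod.intCast_zmod_eq_zero_iff_dvd _ _).mpr hd)
  have hdvd : ((r⁻¹).den : ℤ) ∣ r.num := by
    rw [Rat.inv_def]
    exact Rat.den_dvd _ _
  intro hpd
  exact hnum (dvd_trans (Int.natCast_dvd_natCast.mpr hpd) hdvd)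

lemma pcast_inv {r : ℚ} (h : pInt p r) (h0 : (r : ZMod p) ≠ 0) :
    ((r⁻¹ : ℚ) : ZMod p) = (r : ZMod p)⁻¹ :=
  Rat.cast_inv_of_ne_zero (pcast_num_ne_zero h h0)

lemma pInt_div {q r : ℚ} (hq : pInt p q) (hr : pInt p r) (h0 : (r : ZMod p) ≠ 0) :
    pInt p (q / r) := by
  rw [div_eq_mul_inv]; exact pInt_mul hq (pInt_inv hr h0)

lemma pcast_div {q r : ℚ} (hq : pInt p q) (hr : pInt p r) (h0 : (r : ZMod p) ≠ 0) :
    ((q / r : ℚ) : ZMod p) = (q : ZMod p) / (r : ZMod p) := by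
  rw [div_eq_mul_inv, pcast_mul hq (pInt_inv hr h0), pcast_inv hr h0, div_eq_mul_inv]

lemma pCong_iff {r s : ℚ} (hr : pInt p r) (hs : pInt p s) :
    pCong p r s ↔ ((r : ZMod p) = (s : ZMod p)) := by
  constructor
  · rintro ⟨c, hc, e⟩
    have h1 : ((r - s : ℚ) : ZMod p) = (((p : ℚ) * c : ℚ) : ZMod p) := by rw [e]
    rw [pcast_sub hr hs, pcast_mul (pInt_natCast p) hc] at h1
    rw [Rat.cast_natCast, ZMod.natCast_self, zero_mul] at h1
    exact sub_eq_zero.mp h1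
  · intro h
    set u := r - s with hu_def
    have hu : pInt p u := pInt_sub hr hs
    have hcast : (u : ZMod p) = 0 := by
      rw [hu_def, pcast_sub hr hs, h, sub_self]
    have hnum : (p : ℤ) ∣ u.num := by
      rw [← ZMod.intCast_zmod_eq_zero_iff_dvd]
      by_contra hne
      have hden : ((u.den : ZMod p) ≠ 0) := pInt_iff.mp hu
      rw [Rat.cast_def, div_eq_zero_iff] at hcast
      rcases hcast with h' | h'
      · exact hne h'
      · exact hden h'
    obtain ⟨m, hm⟩ := hnum
    refine ⟨(m : ℚ) / (u.den : ℚ), ?_, ?_⟩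
    · have hdvd : (((m : ℚ) / (u.den : ℚ)).den : ℤ) ∣ (u.den : ℤ) := by
        rw [show (m : ℚ) / (u.den : ℚ) = Rat.divInt m u.den by
          rw [Rat.divInt_eq_div]; norm_cast]
        exact Rat.den_dvd m u.den
      intro hpd
      apply hu
      exact Nat.dvd_trans hpd (Int.natCast_dvd_natCast.mp hdvd)
    · have hden0 : ((u.den : ℚ)) ≠ 0 := by
        exact_mod_cast u.den_nz
      have : (p : ℚ) * ((m : ℚ) / (u.den : ℚ)) = ((u.num : ℚ)) / (u.den : ℚ) := by
        rw [hm]; push_cast; ring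
      rw [this, Rat.num_div_den]

lemma prod_natCast_sub (n k : ℕ) :
    (∏ i ∈ range k, ((n : ℚ) - i)) = (n.descFactorial k : ℚ) := by
  induction k with
  | zero => simp
  | succ k ih =>
      rw [Finset.prod_range_succ, ih, Nat.descFactorial_succ]
      rcases le_or_gt (k + 1) n with h | h
      · have hk : k ≤ n := Nat.le_of_succ_le h
        push_cast [Nat.cast_sub hk]
        ring
      · have hlt : n < k + 1 := h
        rcases Nat.lt_succ_iff_lt_or_eq.mp hlt with h' | h'
        · rw [Nat.descFactorial_eq_zero_iff_lt.mpr h']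
          push_cast
          ring
        · subst h'
          rw [Nat.sub_self]
          push_cast
          ring

lemma gchoose_natCast (n k : ℕ) : gchoose (n : ℚ) k = (n.choose k : ℚ) := by
  rw [gchoose, prod_natCast_sub, Nat.descFactorial_eq_factorial_mul_choose]
  have hfac : ((k.factorial : ℚ)) ≠ 0 := by
    exact_mod_cast k.factorial_ne_zero
  push_cast
  field_simp

lemma prod_neg_natCast_sub (n k : ℕ) :
    (∏ i ∈ range k, ((-1 - (n : ℚ)) - i)) = (-1) ^ k * ((n + k).descFactorial k : ℚ) := by
  induction k with
  | zero => simp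
  | succ k ih =>
      rw [Finset.prod_range_succ, ih]
      have h0 : (n + (k + 1)).descFactorial (k + 1)
          = (n + k + 1) * (n + k).descFactorial k := by
        rw [show n + (k + 1) = (n + k) + 1 from by omega, Nat.succ_descFactorial_succ]
      rw [h0]
      push_cast
      ring

lemma gchoose_neg_natCast (n k : ℕ) :
    gchoose (-1 - (n : ℚ)) k = (-1) ^ k * ((n + k).choose k : ℚ) := by
  rw [gchoose, prod_neg_natCast_sub, Nat.descFactorial_eq_factorial_mul_choose]
  have hfac : ((k.factorial : ℚ)) ≠ 0 := by
    exact_mod_cast k.factorial_ne_zero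
  push_cast
  field_simp

lemma pInt_gchoose {a : ℚ} (ha : pInt p a) {k : ℕ} (hk : k < p) : pInt p (gchoose a k) := by
  have hfac : ((k.factorial : ℚ) : ZMod p) ≠ 0 := by
    rw [Rat.cast_natCast, Ne, ZMod.natCast_eq_zero_iff]
    intro hd
    exact absurd ((Nat.Prime.dvd_factorial hp.out).mp hd) (Nat.not_le.mpr hk)
  exact pInt_div (pInt_prod fun i _ => pInt_sub ha (pInt_natCast i)) (pInt_natCast _) hfac

lemma pcast_gchoose {a : ℚ} (ha : pInt p a) {k : ℕ} (hk : k < p) :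
    ((gchoose a k : ℚ) : ZMod p)
      = (∏ i ∈ range k, ((a : ZMod p) - i)) / (k.factorial : ZMod p) := by
  have hfac : ((k.factorial : ℚ) : ZMod p) ≠ 0 := by
    rw [Rat.cast_natCast, Ne, ZMod.natCast_eq_zero_iff]
    intro hd
    exact absurd ((Nat.Prime.dvd_factorial hp.out).mp hd) (Nat.not_le.mpr hk)
  rw [gchoose, pcast_div (pInt_prod fun i _ => pInt_sub ha (pInt_natCast i))
      (pInt_natCast _) hfac,
    pcast_prod fun i _ => pInt_sub ha (pInt_natCast i), Rat.cast_natCast]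
  congr 1
  refine Finset.prod_congr rfl fun i _ => ?_
  rw [pcast_sub ha (pInt_natCast i), Rat.cast_natCast]

end Helpers

/-- The key `ℕ`-identity: `∑ₖ C(n,k)² C(k,j) = C(n,j) C(2n-j, n)`. -/
lemma nat_core (n j : ℕ) (hj : j ≤ n) :
    ∑ k ∈ Finset.range (n + 1), n.choose k ^ 2 * k.choose j
      = n.choose j * (2 * n - j).choose n := by
  have h1 : ∑ k ∈ Finset.range (n + 1), n.choose k ^ 2 * k.choose j
      = ∑ i ∈ Finset.range (n + 1), n.choose (n - i) ^ 2 * (n - i).choose j := by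
    rw [← Finset.sum_range_reflect (fun k => n.choose k ^ 2 * k.choose j) (n + 1)]
    exact Finset.sum_congr rfl fun i _ => by simp
  rw [h1]
  have h2 : ∑ i ∈ Finset.range (n + 1), n.choose (n - i) ^ 2 * (n - i).choose j
      = ∑ i ∈ Finset.range (n - j + 1), n.choose (n - i) ^ 2 * (n - i).choose j := by
    refine (Finset.sum_subset (Finset.range_subset_range.mpr (by omega)) ?_).symm
    intro i hi hni
    rw [Finset.mem_range] at hi hni
    have : n - i < j := by omega
    rw [Nat.choose_eq_zero_of_lt this, Nat.mul_zero]
  rw [h2]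
  have h3 : ∀ i ∈ Finset.range (n - j + 1),
      n.choose (n - i) ^ 2 * (n - i).choose j
        = n.choose j * (n.choose i * (n - j).choose i) := by
    intro i hi
    rw [Finset.mem_range] at hi
    have hi' : i ≤ n - j := by omega
    have hkn : n - i ≤ n := Nat.sub_le _ _
    have hjk : j ≤ n - i := by omega
    have e1 : n.choose (n - i) * (n - i).choose j
        = n.choose j * (n - j).choose ((n - i) - j) := Nat.choose_mul hjk
    have e2 : (n - i) - j = (n - j) - i := by omega
    have e3 : (n - j).choose ((n - j) - i) = (n - j).choose i :=
      Nat.choose_symm (by omega)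
    have e4 : n.choose (n - i) = n.choose i := Nat.choose_symm (by omega)
    calc n.choose (n - i) ^ 2 * (n - i).choose j
        = n.choose (n - i) * (n.choose (n - i) * (n - i).choose j) := by ring
      _ = n.choose (n - i) * (n.choose j * (n - j).choose ((n - i) - j)) := by rw [e1]
      _ = n.choose i * (n.choose j * (n - j).choose i) := by rw [e2, e3, e4]
      _ = n.choose j * (n.choose i * (n - j).choose i) := by ring
  rw [Finset.sum_congr rfl h3, ← Finset.mul_sum]
  congr 1
  have h2n : 2 * n - j = n + (n - j) := by omega
  have hsymm : (n + (n - j)).choose n = (n + (n - j)).choose (n - j) := by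
    have := Nat.choose_symm (show n - j ≤ n + (n - j) by omega)
    rwa [show n + (n - j) - (n - j) = n by omega] at this
  rw [h2n, hsymm, Nat.add_choose_eq, Finset.Nat.sum_antidiagonal_eq_sum_range_succ_mk]
  refine Finset.sum_congr rfl fun i hi => ?_
  rw [Finset.mem_range] at hi
  show n.choose i * (n - j).choose i = n.choose i * (n - j).choose (n - j - i)
  rw [Nat.choose_symm (show i ≤ n - j by omega)]

/-- The core polynomial identity over a commutative ring. -/
lemma ring_core {R : Type*} [CommRing R] (x : R) (n : ℕ) :
    ∑ k ∈ Finset.range (n + 1), (n.choose k : R) ^ 2 * (x + 1) ^ k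
      = ∑ k ∈ Finset.range (n + 1), (n.choose k : R) * ((n + k).choose k : R) * x ^ (n - k) := by
  have hRHS : ∑ k ∈ Finset.range (n + 1), (n.choose k : R) * ((n + k).choose k : R) * x ^ (n - k)
      = ∑ j ∈ Finset.range (n + 1), (n.choose j : R) * ((2 * n - j).choose n : R) * x ^ j := by
    rw [← Finset.sum_range_reflect
      (fun k => (n.choose k : R) * ((n + k).choose k : R) * x ^ (n - k)) (n + 1)]
    refine Finset.sum_congr rfl fun j hj => ?_
    rw [Finset.mem_range] at hj
    have h1 : n + 1 - 1 - j = n - j := by omega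
    rw [h1]
    have e4 : n.choose (n - j) = n.choose j := Nat.choose_symm (by omega)
    have e5 : (n + (n - j)).choose (n - j) = (2 * n - j).choose n := by
      have h2 : n + (n - j) = 2 * n - j := by omega
      rw [h2]
      have h3 := Nat.choose_symm (show n - j ≤ 2 * n - j by omega)
      rw [show 2 * n - j - (n - j) = n by omega] at h3
      exact h3.symm
    have e6 : n - (n - j) = j := by omega
    rw [e4, e5, e6]
  rw [hRHS]
  have hpow : ∀ k ∈ Finset.range (n + 1), (n.choose k : R) ^ 2 * (x + 1) ^ k
      = ∑ j ∈ Finset.range (n + 1),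
          (n.choose k : R) ^ 2 * (x ^ j * 1 ^ (k - j) * (k.choose j : R)) := by
    intro k hk
    rw [Finset.mem_range] at hk
    have hsub : (x + 1) ^ k = ∑ j ∈ Finset.range (n + 1),
        x ^ j * 1 ^ (k - j) * (k.choose j : R) := by
      rw [add_pow]
      refine Finset.sum_subset (Finset.range_subset_range.mpr (by omega)) ?_
      intro j hj hnj
      rw [Finset.mem_range] at hj hnj
      rw [Nat.choose_eq_zero_of_lt (by omega)]
      simp
    rw [hsub, Finset.mul_sum]
  rw [Finset.sum_congr rfl hpow, Finset.sum_comm]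
  refine Finset.sum_congr rfl fun j hj => ?_
  rw [Finset.mem_range] at hj
  have hstep : ∑ k ∈ Finset.range (n + 1),
      (n.choose k : R) ^ 2 * (x ^ j * 1 ^ (k - j) * (k.choose j : R))
      = (∑ k ∈ Finset.range (n + 1), ((n.choose k ^ 2 * k.choose j : ℕ) : R)) * x ^ j := by
    rw [Finset.sum_mul]
    refine Finset.sum_congr rfl fun k _ => ?_
    simp only [one_pow]
    push_cast
    ring
  rw [hstep, ← Nat.cast_sum, nat_core n j (by omega)]
  push_cast
  ring

/-- The final computation in a field. -/
lemma final_field {K : Type*} [Field K] (T : K) (hT1 : T ≠ 1) (n p : ℕ) (hn : n < p) :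
    ∑ k ∈ Finset.range p, (n.choose k : K) ^ 2 * T ^ k
      = (T - 1) ^ n * ∑ k ∈ Finset.range p,
          (n.choose k : K) * ((-1) ^ k * ((n + k).choose k : K)) * ((1 - T)⁻¹) ^ k := by
  have hx : T - 1 ≠ 0 := sub_ne_zero.mpr hT1
  have hsub : Finset.range (n + 1) ⊆ Finset.range p := Finset.range_subset_range.mpr hn
  have hz1 : ∀ k ∈ Finset.range p, k ∉ Finset.range (n + 1) →
      (n.choose k : K) ^ 2 * T ^ k = 0 := by
    intro k _ hk
    rw [Finset.mem_range] at hk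
    rw [Nat.choose_eq_zero_of_lt (by omega)]
    simp
  have hz2 : ∀ k ∈ Finset.range p, k ∉ Finset.range (n + 1) →
      (n.choose k : K) * ((-1) ^ k * ((n + k).choose k : K)) * ((1 - T)⁻¹) ^ k = 0 := by
    intro k _ hk
    rw [Finset.mem_range] at hk
    rw [Nat.choose_eq_zero_of_lt (by omega)]
    simp
  rw [← Finset.sum_subset hsub hz1, ← Finset.sum_subset hsub hz2]
  have hT : ∑ k ∈ Finset.range (n + 1), (n.choose k : K) ^ 2 * T ^ k
      = ∑ k ∈ Finset.range (n + 1), (n.choose k : K) ^ 2 * ((T - 1) + 1) ^ k := by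
    rw [sub_add_cancel]
  rw [hT, ring_core (T - 1) n, Finset.mul_sum]
  refine Finset.sum_congr rfl fun k hk => ?_
  rw [Finset.mem_range] at hk
  have hk' : k ≤ n := by omega
  have h1 : ((-1 : K)) ^ k * ((1 - T)⁻¹) ^ k = ((T - 1)⁻¹) ^ k := by
    rw [← mul_pow, neg_one_mul, ← inv_neg, neg_sub]
  have h2 : (T - 1) ^ n * ((T - 1)⁻¹) ^ k = (T - 1) ^ (n - k) := by
    rw [inv_pow, ← pow_sub₀ _ hx hk']
  calc (n.choose k : K) * ((n + k).choose k : K) * (T - 1) ^ (n - k)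
      = (n.choose k : K) * ((n + k).choose k : K) * ((T - 1) ^ n * ((T - 1)⁻¹) ^ k) := by
        rw [h2]
    _ = (n.choose k : K) * ((n + k).choose k : K) * ((T - 1) ^ n
          * ((-1 : K) ^ k * ((1 - T)⁻¹) ^ k)) := by rw [h1]
    _ = (T - 1) ^ n * ((n.choose k : K) * ((-1) ^ k * ((n + k).choose k : K))
          * ((1 - T)⁻¹) ^ k) := by ring

theorem sum_gchoose_mul_congr (p : ℕ) (hp : p.Prime) (hodd : Odd p)
    (a t : ℚ) (ha : pInt p a) (ht : pInt p t)
    (ht0 : ¬ pCong p t 0) (ht1 : ¬ pCong p t 1)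
    (n : ℕ) (hn : n < p) (han : pCong p a n) :
    pCong p (∑ k ∈ Finset.range p, gchoose a k ^ 2 * t ^ k)
      ((t - 1) ^ n *
        ∑ k ∈ Finset.range p, gchoose a k * gchoose (-1 - a) k * (1 / (1 - t)) ^ k) := by
  haveI : Fact p.Prime := ⟨hp⟩
  have hm1 : pInt p (-1 : ℚ) := pInt_neg pInt_one
  have hT1 : ((t : ZMod p)) ≠ 1 := by
    intro h
    apply ht1
    rw [pCong_iff ht pInt_one, h, Rat.cast_one]
  have h1t : pInt p (1 - t) := pInt_sub pInt_one ht
  have h1tK : ((1 - t : ℚ) : ZMod p) = 1 - (t : ZMod p) := by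
    rw [pcast_sub pInt_one ht, Rat.cast_one]
  have h1t0 : ((1 - t : ℚ) : ZMod p) ≠ 0 := by
    rw [h1tK]
    exact sub_ne_zero.mpr (Ne.symm hT1)
  have hinv : pInt p (1 / (1 - t)) := by
    rw [one_div]
    exact pInt_inv h1t h1t0
  have hinvK : ((1 / (1 - t) : ℚ) : ZMod p) = (1 - (t : ZMod p))⁻¹ := by
    rw [one_div, pcast_inv h1t h1t0, h1tK]
  have haK : (a : ZMod p) = (n : ZMod p) := by
    have h := (pCong_iff ha (pInt_natCast n)).mp han
    rwa [Rat.cast_natCast] at h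
  have hma : pInt p (-1 - a) := pInt_sub hm1 ha
  have hmn : pInt p (-1 - (n : ℚ)) := pInt_sub hm1 (pInt_natCast n)
  have hcast1 : ((-1 - a : ℚ) : ZMod p) = ((-1 - (n : ℚ) : ℚ) : ZMod p) := by
    rw [pcast_sub hm1 ha, pcast_sub hm1 (pInt_natCast n), haK, Rat.cast_natCast]
  -- gchoose casts
  have hg1 : ∀ k : ℕ, k < p → ((gchoose a k : ℚ) : ZMod p) = (n.choose k : ZMod p) := by
    intro k hk
    have h2 := pcast_gchoose (p := p) (pInt_natCast n) hk
    rw [gchoose_natCast, Rat.cast_natCast, Rat.cast_natCast] at h2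
    rw [pcast_gchoose ha hk, haK]
    exact h2.symm
  have hg2 : ∀ k : ℕ, k < p → ((gchoose (-1 - a) k : ℚ) : ZMod p)
      = (-1) ^ k * (((n + k).choose k : ℕ) : ZMod p) := by
    intro k hk
    have h2 := pcast_gchoose (p := p) hmn hk
    rw [gchoose_neg_natCast] at h2
    have h3 : (((-1 : ℚ) ^ k * ((n + k).choose k : ℚ) : ℚ) : ZMod p)
        = (-1) ^ k * (((n + k).choose k : ℕ) : ZMod p) := by
      have h4 : ((-1 : ℚ)) ^ k * ((n + k).choose k : ℚ)
          = ((((-1 : ℤ)) ^ k * ((n + k).choose k : ℤ) : ℤ) : ℚ) := by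
        push_cast
        ring
      rw [h4, Rat.cast_intCast]
      push_cast
      ring
    rw [h3] at h2
    rw [pcast_gchoose hma hk, hcast1]
    exact h2.symm
  -- p-integrality of the sums
  have hgInt : ∀ k ∈ Finset.range p, pInt p (gchoose a k ^ 2 * t ^ k) := by
    intro k hk
    rw [Finset.mem_range] at hk
    exact pInt_mul (pInt_pow (pInt_gchoose ha hk) 2) (pInt_pow ht k)
  have hRterm : ∀ k ∈ Finset.range p,
      pInt p (gchoose a k * gchoose (-1 - a) k * (1 / (1 - t)) ^ k) := by
    intro k hk
    rw [Finset.mem_range] at hk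
    exact pInt_mul (pInt_mul (pInt_gchoose ha hk) (pInt_gchoose hma hk)) (pInt_pow hinv k)
  have hL : pInt p (∑ k ∈ Finset.range p, gchoose a k ^ 2 * t ^ k) := pInt_sum hgInt
  have hR : pInt p ((t - 1) ^ n *
      ∑ k ∈ Finset.range p, gchoose a k * gchoose (-1 - a) k * (1 / (1 - t)) ^ k) :=
    pInt_mul (pInt_pow (pInt_sub ht pInt_one) n) (pInt_sum hRterm)
  rw [pCong_iff hL hR]
  rw [pcast_sum hgInt,
    pcast_mul (pInt_pow (pInt_sub ht pInt_one) n) (pInt_sum hRterm),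
    pcast_sum hRterm, pcast_pow (pInt_sub ht pInt_one) n, pcast_sub ht pInt_one,
    Rat.cast_one]
  have hLs : ∑ k ∈ Finset.range p, ((gchoose a k ^ 2 * t ^ k : ℚ) : ZMod p)
      = ∑ k ∈ Finset.range p, (n.choose k : ZMod p) ^ 2 * ((t : ℚ) : ZMod p) ^ k := by
    refine Finset.sum_congr rfl fun k hk => ?_
    rw [Finset.mem_range] at hk
    rw [pcast_mul (pInt_pow (pInt_gchoose ha hk) 2) (pInt_pow ht k),
      pcast_pow (pInt_gchoose ha hk) 2, pcast_pow ht k, hg1 k hk]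
  have hRs : ∑ k ∈ Finset.range p,
      ((gchoose a k * gchoose (-1 - a) k * (1 / (1 - t)) ^ k : ℚ) : ZMod p)
      = ∑ k ∈ Finset.range p, (n.choose k : ZMod p)
          * ((-1) ^ k * (((n + k).choose k : ℕ) : ZMod p))
          * ((1 - ((t : ℚ) : ZMod p))⁻¹) ^ k := by
    refine Finset.sum_congr rfl fun k hk => ?_
    rw [Finset.mem_range] at hk
    rw [pcast_mul (pInt_mul (pInt_gchoose ha hk) (pInt_gchoose hma hk)) (pInt_pow hinv k),
      pcast_mul (pInt_gchoose ha hk) (pInt_gchoose hma hk),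
      pcast_pow hinv k, hg1 k hk, hg2 k hk, hinvK]
  rw [hLs, hRs]
  exact final_field ((t : ℚ) : ZMod p) hT1 n p hn
end
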